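/- arXiv:2605.13090 — 8 statements merged into one kernel-verified Lean document; each statement's English description precedes it below -/
import Mathlib

section
/- Let n ≥ 2 and k ≥ 1. The map Ψ sending each s_i to the identity permutation and each ρ_i^α to the transposition (i, i+1) extends to a well-defined surjective homomorphism M_kVT_n → S_n, and M_kVT_n is isomorphic to the semidirect product of its kernel M_kVHT_n with S_n. -/
open Equiv

theorem swap_val' {N : ℕ} (a b x : Fin N) :
    ((Equiv.swap a b x : Fin N) : ℕ) =
      if (x : ℕ) = (a : ℕ) then (b : ℕ) else if (x : ℕ) = (b : ℕ) then (a : ℕ) else (x : ℕ) := by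
  rw [Equiv.swap_apply_def]
  split_ifs with h1 h2 h3 h4 h5 <;> simp_all [Fin.ext_iff]

theorem cr_val {N : ℕ} (p x : Fin (N + 1)) :
    ((Fin.cycleRange p x : Fin (N + 1)) : ℕ) =
      if (x : ℕ) < (p : ℕ) then (x : ℕ) + 1 else if (x : ℕ) = (p : ℕ) then 0 else (x : ℕ) := by
  rw [Fin.cycleRange_apply]
  rcases lt_trichotomy (x : ℕ) (p : ℕ) with h | h | h
  · rw [if_pos (Fin.lt_def.mpr h), if_pos h]
    exact Fin.val_add_one_of_lt (lt_of_lt_of_le (Fin.lt_def.mpr h) (Fin.le_last p))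
  · rw [if_neg (by rw [Fin.lt_def]; omega), if_pos (Fin.ext h), if_neg (by omega), if_pos h,
      Fin.val_zero]
  · rw [if_neg (by rw [Fin.lt_def]; omega), if_neg (by apply Fin.ne_of_val_ne; omega),
      if_neg (by omega), if_neg (by omega)]

section PermIdent
variable {N : ℕ}

theorem cycA (p q a b : Fin (N + 1)) (hb : (b : ℕ) = (a : ℕ) + 1) (hp : (p : ℕ) = (a : ℕ))
    (hq : (q : ℕ) = (b : ℕ)) :
    Fin.cycleRange q * Equiv.swap a b = Fin.cycleRange p := by
  apply Equiv.ext; intro x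
  apply Fin.val_injective
  have h1 := a.is_lt; have h2 := x.is_lt; have h3 := b.is_lt
  simp only [Equiv.Perm.mul_apply, cr_val, swap_val']
  split_ifs <;> omega

theorem cycB (p a b c d : Fin (N + 1)) (hb : (b : ℕ) = (a : ℕ) + 1) (hc : (c : ℕ) = (a : ℕ) + 1)
    (hd : (d : ℕ) = (a : ℕ) + 2) (h : (a : ℕ) + 1 < (p : ℕ)) :
    Fin.cycleRange p * Equiv.swap a b = Equiv.swap c d * Fin.cycleRange p := by
  apply Equiv.ext; intro x
  apply Fin.val_injective
  have h1 := a.is_lt; have h2 := x.is_lt; have h3 := b.is_lt; have h4 := p.is_lt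
  simp only [Equiv.Perm.mul_apply, cr_val, swap_val']
  split_ifs <;> omega

theorem cycC (p a b : Fin (N + 1)) (hb : (b : ℕ) = (a : ℕ) + 1) (h : (p : ℕ) < (a : ℕ)) :
    Fin.cycleRange p * Equiv.swap a b = Equiv.swap a b * Fin.cycleRange p := by
  apply Equiv.ext; intro x
  apply Fin.val_injective
  have h1 := a.is_lt; have h2 := x.is_lt; have h3 := b.is_lt; have h4 := p.is_lt
  simp only [Equiv.Perm.mul_apply, cr_val, swap_val']
  split_ifs <;> omega

theorem swapComm {M : ℕ} (a b c d : Fin M) (h1 : (a : ℕ) ≠ (c : ℕ)) (h2 : (a : ℕ) ≠ (d : ℕ))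
    (h3 : (b : ℕ) ≠ (c : ℕ)) (h4 : (b : ℕ) ≠ (d : ℕ)) :
    Equiv.swap a b * Equiv.swap c d = Equiv.swap c d * Equiv.swap a b := by
  apply Equiv.ext; intro x
  apply Fin.val_injective
  simp only [Equiv.Perm.mul_apply, swap_val']
  split_ifs <;> omega

set_option maxHeartbeats 2000000 in
theorem swapBraid {M : ℕ} (a b c : Fin M) (hb : (b : ℕ) = (a : ℕ) + 1)
    (hc : (c : ℕ) = (a : ℕ) + 2) :
    Equiv.swap a b * Equiv.swap b c * Equiv.swap a b =
      Equiv.swap b c * Equiv.swap a b * Equiv.swap b c := by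
  apply Equiv.ext; intro x
  apply Fin.val_injective
  simp only [Equiv.Perm.mul_apply, swap_val']
  split_ifs <;> omega

end PermIdent

/-- Extension of a permutation of `Fin (n+1)` to `Fin (n+2)` fixing `0`. -/
def extHom (n : ℕ) : Equiv.Perm (Fin (n + 1)) →* Equiv.Perm (Fin (n + 2)) where
  toFun e := Equiv.Perm.decomposeFin.symm (0, e)
  map_one' := by
    show Equiv.Perm.decomposeFin.symm (0, 1) = 1
    rw [Equiv.Perm.decomposeFin_symm_of_one, Equiv.swap_self]
    rfl
  map_mul' a b := by
    apply Equiv.ext; intro x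
    cases x using Fin.cases with
    | zero => simp
    | succ x => simp [Equiv.swap_self]

theorem extHom_apply_succ {n : ℕ} (e : Equiv.Perm (Fin (n + 1))) (x : Fin (n + 1)) :
    extHom n e x.succ = (e x).succ := by
  simp [extHom, Equiv.swap_self]

theorem extHom_apply_zero {n : ℕ} (e : Equiv.Perm (Fin (n + 1))) :
    extHom n e 0 = 0 := by
  simp [extHom]

theorem extHom_injective (n : ℕ) : Function.Injective (extHom n) := by
  intro a b h
  have := Equiv.Perm.decomposeFin.symm.injective (h : Equiv.Perm.decomposeFin.symm (0, a) = _)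
  exact congrArg Prod.snd this

theorem extHom_swap {n : ℕ} (a b : Fin (n + 1)) :
    extHom n (Equiv.swap a b) = Equiv.swap a.succ b.succ := by
  apply Equiv.ext; intro x
  cases x using Fin.cases with
  | zero =>
    rw [extHom_apply_zero, Equiv.swap_apply_of_ne_of_ne (Fin.succ_ne_zero a).symm
      (Fin.succ_ne_zero b).symm]
  | succ x =>
    rw [extHom_apply_succ, (Fin.succ_injective _).swap_apply]

/-- Residual permutation: `π` with the value `π 0` cycled away. -/
def resid (n : ℕ) (π : Equiv.Perm (Fin (n + 2))) : Equiv.Perm (Fin (n + 1)) :=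
  (Equiv.Perm.decomposeFin ((π 0).cycleRange * π)).2

theorem resid_spec (n : ℕ) (π : Equiv.Perm (Fin (n + 2))) :
    extHom n (resid n π) = (π 0).cycleRange * π := by
  set ρ := (π 0).cycleRange * π with hρ
  have h0 : ρ 0 = 0 := by
    rw [hρ, Equiv.Perm.mul_apply, Fin.cycleRange_self]
  have hsymm : Equiv.Perm.decomposeFin.symm (Equiv.Perm.decomposeFin ρ) = ρ :=
    Equiv.symm_apply_apply _ _
  have hfst : (Equiv.Perm.decomposeFin ρ).1 = 0 := by
    conv_lhs => rw [← Equiv.Perm.decomposeFin_symm_apply_zero (Equiv.Perm.decomposeFin ρ).1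
      (Equiv.Perm.decomposeFin ρ).2]
    rw [hsymm, h0]
  show Equiv.Perm.decomposeFin.symm (0, (Equiv.Perm.decomposeFin ρ).2) = ρ
  rw [← hfst, hsymm]

/-- The word `t (p-1) * ⋯ * t 0`. -/
def Wd {G : Type*} [Group G] (t : ℕ → G) : ℕ → G
  | 0 => 1
  | p + 1 => t p * Wd t p

theorem Wd_comm {G : Type*} [Group G] (t : ℕ → G)
    (H2 : ∀ a b : ℕ, a + 2 ≤ b → t a * t b = t b * t a) :
    ∀ p i : ℕ, p + 1 ≤ i → t i * Wd t p = Wd t p * t i := by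
  intro p
  induction p with
  | zero => intro i _; simp [Wd]
  | succ p ih =>
    intro i hi
    show t i * (t p * Wd t p) = t p * Wd t p * t i
    rw [← mul_assoc, ← H2 p i (by omega), mul_assoc, ih i (by omega), ← mul_assoc]

theorem Wd_braid {G : Type*} [Group G] (t : ℕ → G) (m : ℕ)
    (H2 : ∀ a b : ℕ, a + 2 ≤ b → t a * t b = t b * t a)
    (H3 : ∀ a : ℕ, a + 2 ≤ m → t a * t (a + 1) * t a = t (a + 1) * t a * t (a + 1)) :
    ∀ p i : ℕ, i + 2 ≤ p → p ≤ m → t i * Wd t p = Wd t p * t (i + 1) := by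
  intro p
  induction p with
  | zero => intro i h _; omega
  | succ p ih =>
    intro i h hm
    rcases eq_or_lt_of_le h with heq | hlt
    · -- p + 1 = i + 2, i.e. p = i + 1
      have hp : p = i + 1 := by omega
      subst hp
      show t i * (t (i + 1) * (t i * Wd t i)) = t (i + 1) * (t i * Wd t i) * t (i + 1)
      have hcomm : t (i + 1) * Wd t i = Wd t i * t (i + 1) := Wd_comm t H2 i (i + 1) (by omega)
      calc t i * (t (i + 1) * (t i * Wd t i)) = t i * t (i + 1) * t i * Wd t i := by
            simp [mul_assoc]
        _ = t (i + 1) * t i * t (i + 1) * Wd t i := by rw [H3 i (by omega)]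
        _ = t (i + 1) * t i * (t (i + 1) * Wd t i) := by simp [mul_assoc]
        _ = t (i + 1) * t i * (Wd t i * t (i + 1)) := by rw [hcomm]
        _ = t (i + 1) * (t i * Wd t i) * t (i + 1) := by simp [mul_assoc]
    · -- i + 2 ≤ p
      show t i * (t p * Wd t p) = t p * Wd t p * t (i + 1)
      rw [← mul_assoc, H2 i p (by omega), mul_assoc, ih i (by omega) (by omega), ← mul_assoc]

theorem exists_perm_hom (n : ℕ) {G : Type*} [Group G] (t : Fin n → G)
    (h1 : ∀ i, t i * t i = 1)
    (h2 : ∀ i j : Fin n, (i : ℕ) + 2 ≤ (j : ℕ) → t i * t j = t j * t i)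
    (h3 : ∀ i j : Fin n, (j : ℕ) = (i : ℕ) + 1 → t i * t j * t i = t j * t i * t j) :
    ∃ f : Equiv.Perm (Fin (n + 1)) →* G,
      ∀ i : Fin n, f (Equiv.swap i.castSucc i.succ) = t i := by
  induction n with
  | zero => exact ⟨1, fun i => i.elim0⟩
  | succ n ih =>
    obtain ⟨f', hf'⟩ := ih (fun j => t j.succ) (fun i => h1 i.succ)
      (fun i j hij => h2 i.succ j.succ (by simp [Fin.val_succ]; omega))
      (fun i j hij => h3 i.succ j.succ (by simp [Fin.val_succ]; omega))
    set tt : ℕ → G := fun a => if h : a < n + 1 then t ⟨a, h⟩ else 1 with htt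
    have httv : ∀ (a : ℕ) (h : a < n + 1), tt a = t ⟨a, h⟩ := by
      intro a h; simp only [htt]; exact dif_pos h
    have ht1 : ∀ a : ℕ, tt a * tt a = 1 := by
      intro a
      by_cases h : a < n + 1
      · rw [httv a h]; exact h1 _
      · simp only [htt, dif_neg h, mul_one]
    have ht2 : ∀ a b : ℕ, a + 2 ≤ b → tt a * tt b = tt b * tt a := by
      intro a b hab
      by_cases hb : b < n + 1
      · rw [httv a (by omega), httv b hb]
        exact h2 _ _ (by simpa using hab)
      · simp only [htt, dif_neg hb, mul_one, one_mul]
    have ht3 : ∀ a : ℕ, a + 2 ≤ n + 1 →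
        tt a * tt (a + 1) * tt a = tt (a + 1) * tt a * tt (a + 1) := by
      intro a ha
      rw [httv a (by omega), httv (a + 1) (by omega)]
      exact h3 ⟨a, by omega⟩ ⟨a + 1, by omega⟩ rfl
    have hfw : ∀ j : Fin n, f' (Equiv.swap j.castSucc j.succ) = tt ((j : ℕ) + 1) := by
      intro j
      rw [hf' j, httv ((j : ℕ) + 1) (by omega)]
      congr 1
    set σ : Equiv.Perm (Fin (n + 2)) → G :=
      fun π => Wd tt ((π 0 : Fin (n + 2)) : ℕ) * f' (resid n π) with hσ
    -- the key left-multiplication lemma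
    have key : ∀ (i : Fin (n + 1)) (π : Equiv.Perm (Fin (n + 2))),
        σ (Equiv.swap i.castSucc i.succ * π) = tt (i : ℕ) * σ π := by
      intro i π
      have hq : (Equiv.swap i.castSucc i.succ * π) 0 = Equiv.swap i.castSucc i.succ (π 0) := rfl
      have hpl := (π 0).is_lt
      have hil := i.is_lt
      have hcsv : ((i.castSucc : Fin (n + 2)) : ℕ) = (i : ℕ) := rfl
      have hsv : ((i.succ : Fin (n + 2)) : ℕ) = (i : ℕ) + 1 := rfl
      show Wd tt (((Equiv.swap i.castSucc i.succ * π) 0 : Fin (n + 2)) : ℕ) *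
          f' (resid n (Equiv.swap i.castSucc i.succ * π)) =
        tt (i : ℕ) * (Wd tt ((π 0 : Fin (n + 2)) : ℕ) * f' (resid n π))
      rcases lt_trichotomy ((π 0 : Fin (n + 2)) : ℕ) ((i : ℕ)) with hcase | hcase | hcase
      · -- π 0 < i
        have hspv : Equiv.swap i.castSucc i.succ (π 0) = π 0 :=
          Equiv.swap_apply_of_ne_of_ne (Fin.ne_of_val_ne (by omega))
            (Fin.ne_of_val_ne (by omega))
        set j : Fin n := ⟨(i : ℕ) - 1, by omega⟩ with hj
        have hjv : (j : ℕ) = (i : ℕ) - 1 := rfl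
        have hext : extHom n (Equiv.swap j.castSucc j.succ) =
            Equiv.swap i.castSucc i.succ := by
          rw [extHom_swap]
          congr 1 <;> apply Fin.val_injective <;>
            simp only [Fin.val_succ, Fin.coe_castSucc] <;> omega
        have hres : resid n (Equiv.swap i.castSucc i.succ * π) =
            Equiv.swap j.castSucc j.succ * resid n π := by
          apply extHom_injective
          rw [map_mul, hext, resid_spec, resid_spec, hq, hspv, ← mul_assoc, ← mul_assoc,
            cycC (π 0) i.castSucc i.succ (by simp) (by omega)]
        rw [hres, hq, hspv, map_mul, hfw j,
          show ((j : ℕ) + 1) = (i : ℕ) from by omega, ← mul_assoc,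
          ← Wd_comm tt ht2 ((π 0 : Fin (n + 2)) : ℕ) (i : ℕ) (by omega), mul_assoc]
      · -- π 0 = i
        have hspv : Equiv.swap i.castSucc i.succ (π 0) = i.succ := by
          rw [show π 0 = i.castSucc from Fin.val_injective (by omega), Equiv.swap_apply_left]
        have hres : resid n (Equiv.swap i.castSucc i.succ * π) = resid n π := by
          apply extHom_injective
          rw [resid_spec, resid_spec, hq, hspv, ← mul_assoc,
            cycA (π 0) i.succ i.castSucc i.succ (by simp) (by omega) (by omega)]
        rw [hres, hq, hspv, hsv, hcase]
        rw [show Wd tt ((i : ℕ) + 1) = tt (i : ℕ) * Wd tt (i : ℕ) from rfl, mul_assoc]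
      · rcases eq_or_lt_of_le (Nat.succ_le_of_lt hcase) with hcase2 | hcase2
        · -- π 0 = i + 1
          have hspv : Equiv.swap i.castSucc i.succ (π 0) = i.castSucc := by
            rw [show π 0 = i.succ from Fin.val_injective (by omega), Equiv.swap_apply_right]
          have hres : resid n (Equiv.swap i.castSucc i.succ * π) = resid n π := by
            apply extHom_injective
            rw [resid_spec, resid_spec, hq, hspv, ← mul_assoc]
            congr 1
            have hA := cycA i.castSucc i.succ i.castSucc i.succ (by simp) (by simp) (by simp)
            calc Fin.cycleRange i.castSucc * Equiv.swap i.castSucc i.succ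
                = Fin.cycleRange i.succ * Equiv.swap i.castSucc i.succ *
                    Equiv.swap i.castSucc i.succ := by rw [hA]
              _ = Fin.cycleRange i.succ := by
                  rw [mul_assoc, Equiv.swap_mul_self, mul_one]
            rw [show π 0 = i.succ from Fin.val_injective (by omega)]
          rw [hres, hq, hspv, hcsv, show ((π 0 : Fin (n + 2)) : ℕ) = (i : ℕ) + 1 from by omega]
          rw [show Wd tt ((i : ℕ) + 1) = tt (i : ℕ) * Wd tt (i : ℕ) from rfl,
            ← mul_assoc, ← mul_assoc, ht1, one_mul]
        · -- i + 1 < π 0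
          have hspv : Equiv.swap i.castSucc i.succ (π 0) = π 0 :=
            Equiv.swap_apply_of_ne_of_ne (Fin.ne_of_val_ne (by omega))
              (Fin.ne_of_val_ne (by omega))
          set j : Fin n := ⟨(i : ℕ), by omega⟩ with hj
          have hjv : (j : ℕ) = (i : ℕ) := rfl
          have hres : resid n (Equiv.swap i.castSucc i.succ * π) =
              Equiv.swap j.castSucc j.succ * resid n π := by
            apply extHom_injective
            rw [map_mul, extHom_swap, resid_spec, resid_spec, hq, hspv, ← mul_assoc, ← mul_assoc,
              cycB (π 0) i.castSucc i.succ j.castSucc.succ j.succ.succ (by simp)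
                (by simp [hjv]) (by simp [hjv]) (by omega)]
          rw [hres, hq, hspv, map_mul, hfw j, show ((j : ℕ) + 1) = (i : ℕ) + 1 from by omega,
            ← mul_assoc, ← mul_assoc,
            ← Wd_braid tt (n + 1) ht2 ht3 ((π 0 : Fin (n + 2)) : ℕ) (i : ℕ) (by omega) (by omega)]
    -- σ at 1 and at generators
    have hσ1 : σ 1 = 1 := by
      have hres : resid n 1 = 1 := by
        apply extHom_injective
        rw [resid_spec, map_one]
        show Fin.cycleRange ((1 : Equiv.Perm (Fin (n + 2))) 0) * 1 = 1
        rw [Equiv.Perm.one_apply, Fin.cycleRange_zero, one_mul]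
      show Wd tt (((1 : Equiv.Perm (Fin (n + 2))) 0 : Fin (n + 2)) : ℕ) * f' (resid n 1) = 1
      rw [hres, map_one, Equiv.Perm.one_apply, mul_one]
      rfl
    have hσs : ∀ i : Fin (n + 1), σ (Equiv.swap i.castSucc i.succ) = tt (i : ℕ) := by
      intro i
      rw [← mul_one (Equiv.swap i.castSucc i.succ), key, hσ1, mul_one]
    -- σ is multiplicative
    have hmul : ∀ g h : Equiv.Perm (Fin (n + 2)), σ (g * h) = σ g * σ h := by
      intro g
      have hg : g ∈ Submonoid.closure
          (Set.range fun i : Fin (n + 1) => Equiv.swap i.castSucc i.succ) := by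
        rw [Equiv.Perm.mclosure_swap_castSucc_succ (n + 1)]
        trivial
      induction hg using Submonoid.closure_induction with
      | mem x hx =>
        obtain ⟨i, rfl⟩ := hx
        intro h
        rw [key, hσs]
      | one => intro h; rw [one_mul, hσ1, one_mul]
      | mul x y hx hy px py =>
        intro h
        rw [mul_assoc, px (y * h), py h, ← mul_assoc, ← px y]
    refine ⟨MonoidHom.mk' σ (fun a b => hmul a b), fun i => ?_⟩
    show σ (Equiv.swap i.castSucc i.succ) = t i
    rw [hσs i, httv (i : ℕ) i.is_lt]





/-- Generators of the multi-virtual twin group `M_{k+1}VT_{m+2}`: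
`s i` for `i = 0, …, m` and `ρ i α` for `i = 0, …, m`, `α = 0, …, k`. -/
inductive MVTGen (m k : ℕ) : Type
  | s : Fin (m + 1) → MVTGen m k
  | rho : Fin (m + 1) → Fin (k + 1) → MVTGen m k

open FreeGroup in
/-- The defining relators of the multi-virtual twin group `M_{k+1}VT_{m+2}`. -/
def mvtRels (m k : ℕ) : Set (FreeGroup (MVTGen m k)) :=
  { r | (∃ i : Fin (m + 1), r = of (MVTGen.s i) * of (MVTGen.s i))
    ∨ (∃ i j : Fin (m + 1), (i.1 + 2 ≤ j.1 ∨ j.1 + 2 ≤ i.1) ∧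
        r = of (MVTGen.s i) * of (MVTGen.s j) * (of (MVTGen.s i))⁻¹ * (of (MVTGen.s j))⁻¹)
    ∨ (∃ (i : Fin (m + 1)) (α : Fin (k + 1)),
        r = of (MVTGen.rho i α) * of (MVTGen.rho i α))
    ∨ (∃ (i j : Fin (m + 1)) (α β : Fin (k + 1)), (i.1 + 2 ≤ j.1 ∨ j.1 + 2 ≤ i.1) ∧
        r = of (MVTGen.rho i α) * of (MVTGen.rho j β) *
            (of (MVTGen.rho i α))⁻¹ * (of (MVTGen.rho j β))⁻¹)
    ∨ (∃ (i j : Fin (m + 1)) (α : Fin (k + 1)), (i.1 + 2 ≤ j.1 ∨ j.1 + 2 ≤ i.1) ∧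
        r = of (MVTGen.rho i α) * of (MVTGen.s j) *
            (of (MVTGen.rho i α))⁻¹ * (of (MVTGen.s j))⁻¹)
    ∨ (∃ (i j : Fin (m + 1)) (α : Fin (k + 1)), j.1 = i.1 + 1 ∧
        r = of (MVTGen.rho i α) * of (MVTGen.rho j α) * of (MVTGen.rho i α) *
            (of (MVTGen.rho j α) * of (MVTGen.rho i α) * of (MVTGen.rho j α))⁻¹)
    ∨ (∃ (i j : Fin (m + 1)) (α β : Fin (k + 1)), j.1 = i.1 + 1 ∧ α.1 < β.1 ∧
        r = of (MVTGen.rho i α) * of (MVTGen.rho j β) * of (MVTGen.rho i β) *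
            (of (MVTGen.rho j β) * of (MVTGen.rho i β) * of (MVTGen.rho j α))⁻¹)
    ∨ (∃ (i j : Fin (m + 1)) (α β : Fin (k + 1)), j.1 = i.1 + 1 ∧ α.1 < β.1 ∧
        r = of (MVTGen.rho i α) * of (MVTGen.rho j α) * of (MVTGen.rho i β) *
            (of (MVTGen.rho j β) * of (MVTGen.rho i α) * of (MVTGen.rho j α))⁻¹)
    ∨ (∃ (i j : Fin (m + 1)) (α : Fin (k + 1)), j.1 = i.1 + 1 ∧
        r = of (MVTGen.rho i α) * of (MVTGen.rho j α) * of (MVTGen.s i) *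
            (of (MVTGen.s j) * of (MVTGen.rho i α) * of (MVTGen.rho j α))⁻¹) }

/-- The multi-virtual twin group `M_{k+1}VT_{m+2}`. -/
def MVT (m k : ℕ) : Type := PresentedGroup (mvtRels m k)

instance (m k : ℕ) : Group (MVT m k) := by unfold MVT; infer_instance

/-- The image in `M_{k+1}VT_{m+2}` of a generator. -/
def MVT.gen {m k : ℕ} (g : MVTGen m k) : MVT m k := PresentedGroup.of g

/-- The images of the generators under `Ψ`. -/
def mvtF (m k : ℕ) : MVTGen m k → Equiv.Perm (Fin (m + 2))
  | .s _ => 1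
  | .rho i _ => Equiv.swap i.castSucc i.succ

/-- The map `Ψ` sending each `sᵢ` to the identity permutation and each `ρᵢ^α` to the
transposition `(i, i+1)` extends to a well-defined surjective homomorphism
`M_{k+1}VT_{m+2} → S_{m+2}`, and `M_{k+1}VT_{m+2}` is isomorphic to the semidirect
product of its kernel `M_{k+1}VHT_{m+2}` with `S_{m+2}`. -/
theorem mvt_semidirect_semipure (m k : ℕ) :
    ∃ Ψ : MVT m k →* Equiv.Perm (Fin (m + 2)),
      Function.Surjective Ψ ∧
      (∀ i : Fin (m + 1), Ψ (MVT.gen (MVTGen.s i)) = 1) ∧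
      (∀ (i : Fin (m + 1)) (α : Fin (k + 1)),
        Ψ (MVT.gen (MVTGen.rho i α)) = Equiv.swap i.castSucc i.succ) ∧
      (∃ φ : Equiv.Perm (Fin (m + 2)) →* MulAut Ψ.ker,
        Nonempty (MVT m k ≃* Ψ.ker ⋊[φ] Equiv.Perm (Fin (m + 2)))) := by
  classical
  -- auxiliary facts about adjacent swaps
  have hswap_braid : ∀ i j : Fin (m + 1), (j : ℕ) = (i : ℕ) + 1 →
      Equiv.swap i.castSucc i.succ * Equiv.swap j.castSucc j.succ * Equiv.swap i.castSucc i.succ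
        = Equiv.swap j.castSucc j.succ * Equiv.swap i.castSucc i.succ *
            Equiv.swap j.castSucc j.succ := by
    intro i j hij
    have hjc : (j.castSucc : Fin (m + 2)) = i.succ := Fin.val_injective (by simp [hij])
    rw [hjc]
    exact swapBraid i.castSucc i.succ j.succ (by simp) (by simp [hij])
  have hswap_comm : ∀ i j : Fin (m + 1), ((i : ℕ) + 2 ≤ (j : ℕ) ∨ (j : ℕ) + 2 ≤ (i : ℕ)) →
      Equiv.swap i.castSucc i.succ * Equiv.swap j.castSucc j.succ
        = Equiv.swap j.castSucc j.succ * Equiv.swap i.castSucc i.succ := by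
    intro i j hij
    apply swapComm <;> simp only [Fin.val_succ, Fin.coe_castSucc] <;> omega
  -- the relators map to 1
  have hrel : ∀ r ∈ mvtRels m k, FreeGroup.lift (mvtF m k) r = 1 := by
    intro r hr
    rcases hr with ⟨i, rfl⟩ | ⟨i, j, hij, rfl⟩ | ⟨i, α, rfl⟩ | ⟨i, j, α, β, hij, rfl⟩ |
      ⟨i, j, α, hij, rfl⟩ | ⟨i, j, α, hij, rfl⟩ | ⟨i, j, α, β, hij, hab, rfl⟩ |
      ⟨i, j, α, β, hij, hab, rfl⟩ | ⟨i, j, α, hij, rfl⟩ <;>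
      simp only [map_mul, map_inv, FreeGroup.lift_apply_of, mvtF]
    · group
    · group
    · exact Equiv.swap_mul_self _ _
    · rw [hswap_comm i j hij]; group
    · group
    · rw [hswap_braid i j hij]; group
    · rw [hswap_braid i j hij]; group
    · rw [hswap_braid i j hij]; group
    · group
  have hΨs : ∀ i : Fin (m + 1),
      PresentedGroup.toGroup hrel (MVT.gen (MVTGen.s i)) = 1 :=
    fun i => PresentedGroup.toGroup.of hrel
  have hΨrho : ∀ (i : Fin (m + 1)) (α : Fin (k + 1)),
      PresentedGroup.toGroup hrel (MVT.gen (MVTGen.rho i α)) =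
        Equiv.swap i.castSucc i.succ :=
    fun i α => PresentedGroup.toGroup.of hrel
  -- relations among the `ρ i 0` in `MVT m k`
  have hone : ∀ r ∈ mvtRels m k, PresentedGroup.mk (mvtRels m k) r = 1 := fun r hr =>
    (QuotientGroup.eq_one_iff r).mpr (Subgroup.subset_normalClosure hr)
  have hgen : ∀ g : MVTGen m k, MVT.gen g = PresentedGroup.mk (mvtRels m k) (FreeGroup.of g) :=
    fun g => rfl
  have hsq : ∀ i : Fin (m + 1),
      (MVT.gen (MVTGen.rho i 0) : MVT m k) * MVT.gen (MVTGen.rho i 0) = 1 := by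
    intro i
    have h := hone _ (Or.inr (Or.inr (Or.inl ⟨i, 0, rfl⟩)))
    rw [map_mul] at h
    exact h
  have hcomm : ∀ i j : Fin (m + 1), (i : ℕ) + 2 ≤ (j : ℕ) →
      (MVT.gen (MVTGen.rho i 0) : MVT m k) * MVT.gen (MVTGen.rho j 0) =
        MVT.gen (MVTGen.rho j 0) * MVT.gen (MVTGen.rho i 0) := by
    intro i j hij
    have h := hone _ (Or.inr (Or.inr (Or.inr (Or.inl ⟨i, j, 0, 0, Or.inl hij, rfl⟩))))
    rw [map_mul, map_mul, map_mul, map_inv, map_inv] at h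
    rw [← hgen, ← hgen] at h
    exact mul_inv_eq_iff_eq_mul.mp (mul_inv_eq_one.mp h)
  have hbraid : ∀ i j : Fin (m + 1), (j : ℕ) = (i : ℕ) + 1 →
      (MVT.gen (MVTGen.rho i 0) : MVT m k) * MVT.gen (MVTGen.rho j 0) * MVT.gen (MVTGen.rho i 0)
        = MVT.gen (MVTGen.rho j 0) * MVT.gen (MVTGen.rho i 0) * MVT.gen (MVTGen.rho j 0) := by
    intro i j hij
    have h := hone _ (Or.inr (Or.inr (Or.inr (Or.inr (Or.inr (Or.inl ⟨i, j, 0, hij, rfl⟩))))))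
    rw [map_mul, map_mul, map_mul, map_inv] at h
    rw [map_mul, map_mul] at h
    rw [← hgen, ← hgen] at h
    exact mul_inv_eq_one.mp h
  -- the section
  obtain ⟨σ, hσ⟩ := exists_perm_hom (m + 1) (G := PresentedGroup (mvtRels m k)) (fun i => MVT.gen (MVTGen.rho i 0))
    (fun i => hsq i) (fun i j h => hcomm i j h) (fun i j h => hbraid i j h)
  have hsec : ∀ g : Equiv.Perm (Fin (m + 2)), PresentedGroup.toGroup hrel (σ g) = g := by
    intro g
    have hg : g ∈ Submonoid.closure
        (Set.range fun i : Fin (m + 1) => Equiv.swap i.castSucc i.succ) := by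
      rw [Equiv.Perm.mclosure_swap_castSucc_succ (m + 1)]
      trivial
    induction hg using Submonoid.closure_induction with
    | mem x hx =>
      obtain ⟨i, rfl⟩ := hx
      rw [hσ i, hΨrho i 0]
    | one => rw [map_one, map_one]
    | mul x y hx hy px py => rw [map_mul, map_mul, px, py]
  refine ⟨PresentedGroup.toGroup hrel, ?_, hΨs, hΨrho, ?_⟩
  · -- surjectivity
    intro g
    exact ⟨σ g, hsec g⟩
  · -- semidirect product decomposition
    haveI hN : (PresentedGroup.toGroup hrel).ker.Normal :=
      MonoidHom.normal_ker _
    refine ⟨(@MulAut.conjNormal (PresentedGroup (mvtRels m k)) _ _ hN).comp σ, ⟨?_⟩⟩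
    set Ψ := PresentedGroup.toGroup hrel with hΨ
    have hcompat : ∀ g : Equiv.Perm (Fin (m + 2)),
        Ψ.ker.subtype.comp
            ((((@MulAut.conjNormal (PresentedGroup (mvtRels m k)) _ _ hN).comp σ) g).toMonoidHom) =
          (MulAut.conj (σ g)).toMonoidHom.comp Ψ.ker.subtype := by
      intro g
      ext x
      rfl
    set e : Ψ.ker ⋊[(@MulAut.conjNormal (PresentedGroup (mvtRels m k)) _ _ hN).comp σ] Equiv.Perm (Fin (m + 2)) →*
        PresentedGroup (mvtRels m k) := SemidirectProduct.lift Ψ.ker.subtype σ hcompat with he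
    have he_apply : ∀ x : Ψ.ker ⋊[(@MulAut.conjNormal (PresentedGroup (mvtRels m k)) _ _ hN).comp σ]
        Equiv.Perm (Fin (m + 2)), e x = (x.left : PresentedGroup (mvtRels m k)) * σ x.right := fun x => rfl
    have hinj : Function.Injective e := by
      rw [injective_iff_map_eq_one]
      rintro ⟨l, r⟩ hx
      rw [he_apply] at hx
      have h2 : Ψ ((l : PresentedGroup (mvtRels m k)) * σ r) = 1 := by rw [hx, map_one]
      rw [map_mul, hsec, MonoidHom.mem_ker.mp l.2, one_mul] at h2
      subst h2
      rw [map_one, mul_one] at hx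
      have hl : l = 1 := Subtype.ext hx
      subst hl
      rfl
    have hsurj : Function.Surjective e := by
      intro x
      refine ⟨⟨⟨x * (σ (Ψ x))⁻¹, ?_⟩, Ψ x⟩, ?_⟩
      · rw [MonoidHom.mem_ker, map_mul, map_inv, hsec, mul_inv_cancel]
      · rw [he_apply]
        exact inv_mul_cancel_right x (σ (Ψ x))
    exact (MulEquiv.ofBijective e ⟨hinj, hsurj⟩).symm
end

section
/- Fix n ≥ 3, k ≥ 1, nonzero y_0,…,y_{k−1} ∈ ℂ, a ∈ ℂ, and b ∈ ℂ*. Define n×n matrices A_i equal to the identity except in rows/columns i, i+1 where it is the block [[−a, −(a²−1)/b],[b, a]], and R_i^α equal to the identity except in rows/columns i, i+1 where it is [[0, 1/y_α],[y_α, 0]]. Then the assignment s_i ↦ A_i, ρ_i^α ↦ R_i^α satisfies all defining relations of M_kVT_n, hence extends to a representation ζ_8 : M_kVT_n → GL_n(ℂ). -/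
/-- The `n × n` matrix equal to the identity except for the `2 × 2` block
`[[a, b], [c, d]]` in rows and columns `i, i+1`. -/
def locMat (n : ℕ) (i : ℕ) (a b c d : ℂ) : Matrix (Fin n) (Fin n) ℂ :=
  Matrix.of fun p q =>
    if p.1 = i ∧ q.1 = i then a
    else if p.1 = i ∧ q.1 = i + 1 then b
    else if p.1 = i + 1 ∧ q.1 = i then c
    else if p.1 = i + 1 ∧ q.1 = i + 1 then d
    else if p = q then 1 else 0

set_option maxHeartbeats 1600000

open Matrix Finset

def locD (n : ℕ) (i : ℕ) (a b c d : ℂ) : Matrix (Fin n) (Fin n) ℂ :=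
  Matrix.of fun p q =>
    if p.1 = i ∧ q.1 = i then a
    else if p.1 = i ∧ q.1 = i + 1 then b
    else if p.1 = i + 1 ∧ q.1 = i then c
    else if p.1 = i + 1 ∧ q.1 = i + 1 then d
    else 0

def locMat3 (n : ℕ) (i : ℕ) (e00 e01 e02 e10 e11 e12 e20 e21 e22 : ℂ) :
    Matrix (Fin n) (Fin n) ℂ :=
  Matrix.of fun p q =>
    if p.1 = i ∧ q.1 = i then e00
    else if p.1 = i ∧ q.1 = i + 1 then e01
    else if p.1 = i ∧ q.1 = i + 2 then e02
    else if p.1 = i + 1 ∧ q.1 = i then e10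
    else if p.1 = i + 1 ∧ q.1 = i + 1 then e11
    else if p.1 = i + 1 ∧ q.1 = i + 2 then e12
    else if p.1 = i + 2 ∧ q.1 = i then e20
    else if p.1 = i + 2 ∧ q.1 = i + 1 then e21
    else if p.1 = i + 2 ∧ q.1 = i + 2 then e22
    else if p = q then 1 else 0

def locD3 (n : ℕ) (i : ℕ) (e00 e01 e02 e10 e11 e12 e20 e21 e22 : ℂ) :
    Matrix (Fin n) (Fin n) ℂ :=
  Matrix.of fun p q =>
    if p.1 = i ∧ q.1 = i then e00
    else if p.1 = i ∧ q.1 = i + 1 then e01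
    else if p.1 = i ∧ q.1 = i + 2 then e02
    else if p.1 = i + 1 ∧ q.1 = i then e10
    else if p.1 = i + 1 ∧ q.1 = i + 1 then e11
    else if p.1 = i + 1 ∧ q.1 = i + 2 then e12
    else if p.1 = i + 2 ∧ q.1 = i then e20
    else if p.1 = i + 2 ∧ q.1 = i + 1 then e21
    else if p.1 = i + 2 ∧ q.1 = i + 2 then e22
    else 0

lemma delta_mul_apply {n : ℕ} (S : Finset (Fin n)) (D D' : Matrix (Fin n) (Fin n) ℂ)
    (hD : ∀ p r, r ∉ S → D p r = 0) (p q : Fin n) :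
    (D * D') p q = ∑ r ∈ S, D p r * D' r q := by
  rw [Matrix.mul_apply, ← Finset.sum_sdiff (Finset.subset_univ S)]
  have h0 : ∑ r ∈ Finset.univ \ S, D p r * D' r q = 0 := by
    apply Finset.sum_eq_zero
    intro r hr
    simp only [Finset.mem_sdiff, Finset.mem_univ, true_and] at hr
    rw [hD p r hr, zero_mul]
  rw [h0, zero_add]

lemma locD_out_col (n i : ℕ) (a b c d : ℂ) (p r : Fin n)
    (h1 : r.1 ≠ i) (h2 : r.1 ≠ i + 1) : locD n i a b c d p r = 0 := by
  simp only [locD, Matrix.of_apply]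
  rw [if_neg (fun h => h1 h.2), if_neg (fun h => h2 h.2),
    if_neg (fun h => h1 h.2), if_neg (fun h => h2 h.2)]

lemma locD_out_row (n i : ℕ) (a b c d : ℂ) (r q : Fin n)
    (h1 : r.1 ≠ i) (h2 : r.1 ≠ i + 1) : locD n i a b c d r q = 0 := by
  simp only [locD, Matrix.of_apply]
  rw [if_neg (fun h => h1 h.1), if_neg (fun h => h1 h.1),
    if_neg (fun h => h2 h.1), if_neg (fun h => h2 h.1)]

lemma locD3_out_row (n i : ℕ) (e00 e01 e02 e10 e11 e12 e20 e21 e22 : ℂ) (r q : Fin n)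
    (h1 : r.1 ≠ i) (h2 : r.1 ≠ i + 1) (h3 : r.1 ≠ i + 2) :
    locD3 n i e00 e01 e02 e10 e11 e12 e20 e21 e22 r q = 0 := by
  simp only [locD3, Matrix.of_apply]
  rw [if_neg (fun h => h1 h.1), if_neg (fun h => h1 h.1), if_neg (fun h => h1 h.1),
    if_neg (fun h => h2 h.1), if_neg (fun h => h2 h.1), if_neg (fun h => h2 h.1),
    if_neg (fun h => h3 h.1), if_neg (fun h => h3 h.1), if_neg (fun h => h3 h.1)]

lemma locD3_out_col (n i : ℕ) (e00 e01 e02 e10 e11 e12 e20 e21 e22 : ℂ) (p r : Fin n)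
    (h1 : r.1 ≠ i) (h2 : r.1 ≠ i + 1) (h3 : r.1 ≠ i + 2) :
    locD3 n i e00 e01 e02 e10 e11 e12 e20 e21 e22 p r = 0 := by
  simp only [locD3, Matrix.of_apply]
  rw [if_neg (fun h => h1 h.2), if_neg (fun h => h2 h.2), if_neg (fun h => h3 h.2),
    if_neg (fun h => h1 h.2), if_neg (fun h => h2 h.2), if_neg (fun h => h3 h.2),
    if_neg (fun h => h1 h.2), if_neg (fun h => h2 h.2), if_neg (fun h => h3 h.2)]

lemma locMat_eq (n i : ℕ) (a b c d : ℂ) :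
    locMat n i a b c d = 1 + locD n i (a-1) b c (d-1) := by
  ext p q
  simp only [locMat, locD, Matrix.add_apply, Matrix.one_apply, Matrix.of_apply, Fin.ext_iff]
  split_ifs <;> first | ring1 | (exfalso ; omega)

lemma locMat3_eq (n i : ℕ) (e00 e01 e02 e10 e11 e12 e20 e21 e22 : ℂ) :
    locMat3 n i e00 e01 e02 e10 e11 e12 e20 e21 e22 =
      1 + locD3 n i (e00-1) e01 e02 e10 (e11-1) e12 e20 e21 (e22-1) := by
  ext p q
  simp only [locMat3, locD3, Matrix.add_apply, Matrix.one_apply, Matrix.of_apply, Fin.ext_iff]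
  split_ifs <;> first | ring1 | (exfalso ; omega)

lemma locD_add (n i : ℕ) (a b c d a' b' c' d' : ℂ) :
    locD n i a b c d + locD n i a' b' c' d' = locD n i (a+a') (b+b') (c+c') (d+d') := by
  ext p q
  simp only [locD, Matrix.add_apply, Matrix.of_apply]
  split_ifs <;> ring

lemma locD3_add (n i : ℕ) (e00 e01 e02 e10 e11 e12 e20 e21 e22
    f00 f01 f02 f10 f11 f12 f20 f21 f22 : ℂ) :
    locD3 n i e00 e01 e02 e10 e11 e12 e20 e21 e22 +
      locD3 n i f00 f01 f02 f10 f11 f12 f20 f21 f22 =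
      locD3 n i (e00+f00) (e01+f01) (e02+f02) (e10+f10) (e11+f11) (e12+f12)
        (e20+f20) (e21+f21) (e22+f22) := by
  ext p q
  simp only [locD3, Matrix.add_apply, Matrix.of_apply]
  split_ifs <;> ring

lemma locD_congr (n i : ℕ) {a b c d a' b' c' d' : ℂ}
    (h1 : a = a') (h2 : b = b') (h3 : c = c') (h4 : d = d') :
    locD n i a b c d = locD n i a' b' c' d' := by rw [h1, h2, h3, h4]

lemma locD3_congr (n i : ℕ) {e00 e01 e02 e10 e11 e12 e20 e21 e22
    f00 f01 f02 f10 f11 f12 f20 f21 f22 : ℂ}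
    (h1 : e00 = f00) (h2 : e01 = f01) (h3 : e02 = f02) (h4 : e10 = f10) (h5 : e11 = f11)
    (h6 : e12 = f12) (h7 : e20 = f20) (h8 : e21 = f21) (h9 : e22 = f22) :
    locD3 n i e00 e01 e02 e10 e11 e12 e20 e21 e22 =
      locD3 n i f00 f01 f02 f10 f11 f12 f20 f21 f22 := by
  rw [h1, h2, h3, h4, h5, h6, h7, h8, h9]

lemma locMat3_congr (n i : ℕ) {e00 e01 e02 e10 e11 e12 e20 e21 e22
    f00 f01 f02 f10 f11 f12 f20 f21 f22 : ℂ}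
    (h1 : e00 = f00) (h2 : e01 = f01) (h3 : e02 = f02) (h4 : e10 = f10) (h5 : e11 = f11)
    (h6 : e12 = f12) (h7 : e20 = f20) (h8 : e21 = f21) (h9 : e22 = f22) :
    locMat3 n i e00 e01 e02 e10 e11 e12 e20 e21 e22 =
      locMat3 n i f00 f01 f02 f10 f11 f12 f20 f21 f22 := by
  rw [h1, h2, h3, h4, h5, h6, h7, h8, h9]

lemma locD_mul (n i : ℕ) (h : i + 1 < n) (a b c d a' b' c' d' : ℂ) :
    locD n i a b c d * locD n i a' b' c' d' =
      locD n i (a*a'+b*c') (a*b'+b*d') (c*a'+d*c') (c*b'+d*d') := by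
  ext p q
  rw [delta_mul_apply {⟨i, by omega⟩, ⟨i+1, h⟩} _ _ (fun p r hr => by
    simp only [Finset.mem_insert, Finset.mem_singleton, Fin.ext_iff] at hr
    push_neg at hr
    exact locD_out_col n i _ _ _ _ p r hr.1 hr.2),
    Finset.sum_insert (by simp only [Finset.mem_singleton, Fin.ext_iff]; omega),
    Finset.sum_singleton]
  simp only [locD, Matrix.of_apply, Fin.ext_iff]
  norm_num
  split_ifs <;> first | ring1 | (exfalso ; omega)

lemma locD3_mul (n i : ℕ) (h : i + 2 < n) (e00 e01 e02 e10 e11 e12 e20 e21 e22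
    f00 f01 f02 f10 f11 f12 f20 f21 f22 : ℂ) :
    locD3 n i e00 e01 e02 e10 e11 e12 e20 e21 e22 *
      locD3 n i f00 f01 f02 f10 f11 f12 f20 f21 f22 =
      locD3 n i (e00*f00+e01*f10+e02*f20) (e00*f01+e01*f11+e02*f21) (e00*f02+e01*f12+e02*f22)
        (e10*f00+e11*f10+e12*f20) (e10*f01+e11*f11+e12*f21) (e10*f02+e11*f12+e12*f22)
        (e20*f00+e21*f10+e22*f20) (e20*f01+e21*f11+e22*f21) (e20*f02+e21*f12+e22*f22) := by
  ext p q
  rw [delta_mul_apply {⟨i, by omega⟩, ⟨i+1, by omega⟩, ⟨i+2, h⟩} _ _ (fun p r hr => by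
    simp only [Finset.mem_insert, Finset.mem_singleton, Fin.ext_iff] at hr
    push_neg at hr
    exact locD3_out_col n i _ _ _ _ _ _ _ _ _ p r hr.1 hr.2.1 hr.2.2),
    Finset.sum_insert (by simp only [Finset.mem_insert, Finset.mem_singleton, Fin.ext_iff]; omega),
    Finset.sum_insert (by simp only [Finset.mem_singleton, Fin.ext_iff]; omega),
    Finset.sum_singleton]
  have hcase : ∀ r : Fin n, r.1 = i ∨ r.1 = i+1 ∨ r.1 = i+2 ∨ (r.1 ≠ i ∧ r.1 ≠ i+1 ∧ r.1 ≠ i+2) := by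
    intro r; omega
  rcases hcase p with hp|hp|hp|hp <;> rcases hcase q with hq|hq|hq|hq <;>
    simp only [locD3, Matrix.of_apply] <;> simp [hp, hq] <;> first | ring1 | (exfalso ; omega)

lemma locD_mul_disjoint (n i j : ℕ) (hij : i + 2 ≤ j) (hi : i + 1 < n)
    (a b c d a' b' c' d' : ℂ) :
    locD n i a b c d * locD n j a' b' c' d' = 0 ∧
      locD n j a' b' c' d' * locD n i a b c d = 0 := by
  constructor
  · ext p q
    rw [delta_mul_apply {⟨i, by omega⟩, ⟨i+1, hi⟩} _ _ (fun p r hr => by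
      simp only [Finset.mem_insert, Finset.mem_singleton, Fin.ext_iff] at hr
      push_neg at hr
      exact locD_out_col n i _ _ _ _ p r hr.1 hr.2)]
    rw [Finset.sum_insert (by simp only [Finset.mem_singleton, Fin.ext_iff]; omega),
      Finset.sum_singleton,
      locD_out_row n j _ _ _ _ _ _ (by simp; omega) (by simp; omega),
      locD_out_row n j _ _ _ _ _ _ (by simp; omega) (by simp; omega)]
    simp
  · ext p q
    by_cases hjn : j + 1 < n
    · rw [delta_mul_apply {⟨j, by omega⟩, ⟨j+1, hjn⟩} _ _ (fun p r hr => by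
        simp only [Finset.mem_insert, Finset.mem_singleton, Fin.ext_iff] at hr
        push_neg at hr
        exact locD_out_col n j _ _ _ _ p r hr.1 hr.2)]
      rw [Finset.sum_insert (by simp only [Finset.mem_singleton, Fin.ext_iff]; omega),
        Finset.sum_singleton,
        locD_out_row n i _ _ _ _ _ _ (by simp; omega) (by simp; omega),
        locD_out_row n i _ _ _ _ _ _ (by simp; omega) (by simp; omega)]
      simp
    · by_cases hjn2 : j < n
      · rw [delta_mul_apply {⟨j, hjn2⟩} _ _ (fun p r hr => by
          simp only [Finset.mem_singleton, Fin.ext_iff] at hr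
          exact locD_out_col n j _ _ _ _ p r hr (by omega))]
        rw [Finset.sum_singleton,
          locD_out_row n i _ _ _ _ _ _ (by simp; omega) (by simp; omega)]
        simp
      · rw [delta_mul_apply (∅ : Finset (Fin n)) _ _ (fun p r hr => by
          exact locD_out_col n j _ _ _ _ p r (by omega) (by omega))]
        simp

lemma locMat_mul (n i : ℕ) (h : i + 1 < n) (a b c d a' b' c' d' : ℂ) :
    locMat n i a b c d * locMat n i a' b' c' d' =
      locMat n i (a*a'+b*c') (a*b'+b*d') (c*a'+d*c') (c*b'+d*d') := by
  rw [locMat_eq n i a b c d, locMat_eq n i a' b' c' d',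
    locMat_eq n i (a*a'+b*c') (a*b'+b*d') (c*a'+d*c') (c*b'+d*d')]
  have expand : ∀ X Y : Matrix (Fin n) (Fin n) ℂ,
      (1 + X) * (1 + Y) = 1 + (X + (Y + X * Y)) := by intros; noncomm_ring
  rw [expand, locD_mul n i h, locD_add, locD_add]
  exact congrArg (1 + ·) (locD_congr n i (by ring) (by ring) (by ring) (by ring))

lemma locMat3_mul (n i : ℕ) (h : i + 2 < n) (e00 e01 e02 e10 e11 e12 e20 e21 e22
    f00 f01 f02 f10 f11 f12 f20 f21 f22 : ℂ) :
    locMat3 n i e00 e01 e02 e10 e11 e12 e20 e21 e22 *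
      locMat3 n i f00 f01 f02 f10 f11 f12 f20 f21 f22 =
      locMat3 n i (e00*f00+e01*f10+e02*f20) (e00*f01+e01*f11+e02*f21) (e00*f02+e01*f12+e02*f22)
        (e10*f00+e11*f10+e12*f20) (e10*f01+e11*f11+e12*f21) (e10*f02+e11*f12+e12*f22)
        (e20*f00+e21*f10+e22*f20) (e20*f01+e21*f11+e22*f21) (e20*f02+e21*f12+e22*f22) := by
  rw [locMat3_eq n i e00 e01 e02 e10 e11 e12 e20 e21 e22,
    locMat3_eq n i f00 f01 f02 f10 f11 f12 f20 f21 f22,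
    locMat3_eq n i (e00*f00+e01*f10+e02*f20) (e00*f01+e01*f11+e02*f21) (e00*f02+e01*f12+e02*f22)
      (e10*f00+e11*f10+e12*f20) (e10*f01+e11*f11+e12*f21) (e10*f02+e11*f12+e12*f22)
      (e20*f00+e21*f10+e22*f20) (e20*f01+e21*f11+e22*f21) (e20*f02+e21*f12+e22*f22)]
  have expand : ∀ X Y : Matrix (Fin n) (Fin n) ℂ,
      (1 + X) * (1 + Y) = 1 + (X + (Y + X * Y)) := by intros; noncomm_ring
  rw [expand, locD3_mul n i h, locD3_add, locD3_add]
  exact congrArg (1 + ·) (locD3_congr n i (by ring) (by ring) (by ring) (by ring) (by ring)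
    (by ring) (by ring) (by ring) (by ring))

lemma locMat_comm (n i j : ℕ) (hij : i + 2 ≤ j) (hi : i + 1 < n)
    (a b c d a' b' c' d' : ℂ) :
    locMat n i a b c d * locMat n j a' b' c' d' =
      locMat n j a' b' c' d' * locMat n i a b c d := by
  rw [locMat_eq n i a b c d, locMat_eq n j a' b' c' d']
  obtain ⟨h1, h2⟩ := locD_mul_disjoint n i j hij hi (a-1) b c (d-1) (a'-1) b' c' (d'-1)
  have expand : ∀ X Y : Matrix (Fin n) (Fin n) ℂ,
      (1 + X) * (1 + Y) = 1 + X + Y + X * Y := by intros; noncomm_ring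
  rw [expand, expand, h1, h2, add_zero, add_zero]
  abel

lemma locMat_one (n i : ℕ) : locMat n i 1 0 0 1 = 1 := by
  ext p q
  simp only [locMat, Matrix.of_apply, Matrix.one_apply, Fin.ext_iff]
  split_ifs <;> first | rfl | omega

lemma locMat_eq3_top (n i : ℕ) (a b c d : ℂ) :
    locMat n i a b c d = locMat3 n i a b 0 c d 0 0 0 1 := by
  ext p q
  simp only [locMat, locMat3, Matrix.of_apply, Fin.ext_iff]
  split_ifs <;> first | rfl | (exfalso ; omega)

lemma locMat_eq3_bot (n i : ℕ) (a b c d : ℂ) :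
    locMat n (i+1) a b c d = locMat3 n i 1 0 0 0 a b 0 c d := by
  ext p q
  simp only [locMat, locMat3, Matrix.of_apply, Fin.ext_iff]
  split_ifs <;> first | rfl | (exfalso ; omega)

noncomputable def zmat (m k : ℕ) (y : Fin (k + 1) → ℂ) (a b : ℂ) :
    MVTGen (m + 1) k → Matrix (Fin (m + 3)) (Fin (m + 3)) ℂ
  | .s i => locMat (m + 3) i.1 (-a) (-((a ^ 2 - 1) / b)) b a
  | .rho i α => locMat (m + 3) i.1 0 (y α)⁻¹ (y α) 0

lemma commutator_relator_eq_one {G : Type*} [Group G] {x y : G} (h : x * y = y * x) :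
    x * y * x⁻¹ * y⁻¹ = 1 := by rw [h]; group


/-- The assignment `sᵢ ↦` (identity except block `[[-a, -(a²-1)/b],[b, a]]` at rows/columns
`i, i+1`) and `ρᵢ^α ↦` (identity except block `[[0, 1/y_α],[y_α, 0]]`) satisfies all
defining relations of `M_{k+1}VT_{m+3}`, hence extends to a representation
`ζ₈ : M_{k+1}VT_{m+3} → GL_{m+3}(ℂ)`. -/
theorem mvt_rep_zeta8 (m k : ℕ) (y : Fin (k + 1) → ℂ) (hy : ∀ α, y α ≠ 0)
    (a b : ℂ) (hb : b ≠ 0) :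
    ∃ ζ : MVT (m + 1) k →* GL (Fin (m + 3)) ℂ,
      (∀ i : Fin (m + 2),
        ((ζ (MVT.gen (MVTGen.s i)) : GL (Fin (m + 3)) ℂ) :
          Matrix (Fin (m + 3)) (Fin (m + 3)) ℂ) =
            locMat (m + 3) i.1 (-a) (-((a ^ 2 - 1) / b)) b a) ∧
      (∀ (i : Fin (m + 2)) (α : Fin (k + 1)),
        ((ζ (MVT.gen (MVTGen.rho i α)) : GL (Fin (m + 3)) ℂ) :
          Matrix (Fin (m + 3)) (Fin (m + 3)) ℂ) = locMat (m + 3) i.1 0 (y α)⁻¹ (y α) 0) := by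
  have hinv : ∀ g, zmat m k y a b g * zmat m k y a b g = 1 := by
    intro g
    cases g with
    | s i =>
      simp only [zmat]
      rw [locMat_mul (m + 3) i.1 (by omega)]
      have e1 : -a * -a + -((a ^ 2 - 1) / b) * b = 1 := by field_simp; ring
      have e2 : -a * -((a ^ 2 - 1) / b) + -((a ^ 2 - 1) / b) * a = 0 := by ring
      have e3 : b * -a + a * b = 0 := by ring
      have e4 : b * -((a ^ 2 - 1) / b) + a * a = 1 := by field_simp; ring
      rw [e1, e2, e3, e4, locMat_one]
    | rho i α =>
      simp only [zmat]
      rw [locMat_mul (m + 3) i.1 (by omega)]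
      have hy1 := hy α
      have e1 : (0:ℂ) * 0 + (y α)⁻¹ * y α = 1 := by field_simp; ring
      have e2 : (0:ℂ) * (y α)⁻¹ + (y α)⁻¹ * 0 = 0 := by ring
      have e3 : y α * 0 + 0 * y α = 0 := by ring
      have e4 : y α * (y α)⁻¹ + (0:ℂ) * 0 = 1 := by field_simp; ring
      rw [e1, e2, e3, e4, locMat_one]
  set F : MVTGen (m + 1) k → GL (Fin (m + 3)) ℂ :=
    fun g => ⟨zmat m k y a b g, zmat m k y a b g, hinv g, hinv g⟩ with hFdef
  have hFval : ∀ g, ((F g : GL (Fin (m + 3)) ℂ) : Matrix (Fin (m + 3)) (Fin (m + 3)) ℂ)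
      = zmat m k y a b g := fun g => rfl
  have hF2 : ∀ g, F g * F g = 1 := fun g => Units.ext (hinv g)
  have hcommM : ∀ (i j : Fin (m + 2)), (i.1 + 2 ≤ j.1 ∨ j.1 + 2 ≤ i.1) →
      ∀ a1 b1 c1 d1 a2 b2 c2 d2 : ℂ,
      locMat (m + 3) i.1 a1 b1 c1 d1 * locMat (m + 3) j.1 a2 b2 c2 d2 =
        locMat (m + 3) j.1 a2 b2 c2 d2 * locMat (m + 3) i.1 a1 b1 c1 d1 := by
    intro i j h a1 b1 c1 d1 a2 b2 c2 d2
    rcases h with h | h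
    · exact locMat_comm (m + 3) i.1 j.1 h (by omega) a1 b1 c1 d1 a2 b2 c2 d2
    · exact (locMat_comm (m + 3) j.1 i.1 h (by omega) a2 b2 c2 d2 a1 b1 c1 d1).symm
  have hrel : ∀ r ∈ mvtRels (m + 1) k, FreeGroup.lift F r = 1 := by
    intro r hr
    simp only [mvtRels, Set.mem_setOf_eq] at hr
    obtain ⟨i, rfl⟩ | ⟨i, j, hij, rfl⟩ | ⟨i, α, rfl⟩ | ⟨i, j, α, β, hij, rfl⟩ |
      ⟨i, j, α, hij, rfl⟩ | ⟨i, j, α, hj, rfl⟩ | ⟨i, j, α, β, hj, hab, rfl⟩ |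
      ⟨i, j, α, β, hj, hab, rfl⟩ | ⟨i, j, α, hj, rfl⟩ := hr
    · simp only [_root_.map_mul, FreeGroup.lift_apply_of]
      exact hF2 _
    · simp only [_root_.map_mul, _root_.map_inv, FreeGroup.lift_apply_of]
      exact commutator_relator_eq_one (Units.ext (hcommM i j hij _ _ _ _ _ _ _ _))
    · simp only [_root_.map_mul, FreeGroup.lift_apply_of]
      exact hF2 _
    · simp only [_root_.map_mul, _root_.map_inv, FreeGroup.lift_apply_of]
      exact commutator_relator_eq_one (Units.ext (hcommM i j hij _ _ _ _ _ _ _ _))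
    · simp only [_root_.map_mul, _root_.map_inv, FreeGroup.lift_apply_of]
      exact commutator_relator_eq_one (Units.ext ((hcommM j i (hij.symm) _ _ _ _ _ _ _ _).symm))
    · -- rel 6
      simp only [_root_.map_mul, _root_.map_inv, FreeGroup.lift_apply_of]
      refine mul_inv_eq_one.mpr (Units.ext ?_)
      show zmat m k y a b _ * zmat m k y a b _ * zmat m k y a b _ =
        zmat m k y a b _ * zmat m k y a b _ * zmat m k y a b _
      simp only [zmat]
      rw [hj]
      have hmul := locMat3_mul (m + 3) i.1 (by omega)
      simp only [locMat_eq3_bot]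
      simp only [locMat_eq3_top]
      rw [hmul, hmul, hmul, hmul]
      have h1 := hy α
      apply locMat3_congr <;> field_simp <;> ring
    · -- rel 7
      simp only [_root_.map_mul, _root_.map_inv, FreeGroup.lift_apply_of]
      refine mul_inv_eq_one.mpr (Units.ext ?_)
      show zmat m k y a b _ * zmat m k y a b _ * zmat m k y a b _ =
        zmat m k y a b _ * zmat m k y a b _ * zmat m k y a b _
      simp only [zmat]
      rw [hj]
      have hmul := locMat3_mul (m + 3) i.1 (by omega)
      simp only [locMat_eq3_bot]
      simp only [locMat_eq3_top]
      rw [hmul, hmul, hmul, hmul]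
      have h1 := hy α; have h2 := hy β
      apply locMat3_congr <;> field_simp <;> ring
    · -- rel 8
      simp only [_root_.map_mul, _root_.map_inv, FreeGroup.lift_apply_of]
      refine mul_inv_eq_one.mpr (Units.ext ?_)
      show zmat m k y a b _ * zmat m k y a b _ * zmat m k y a b _ =
        zmat m k y a b _ * zmat m k y a b _ * zmat m k y a b _
      simp only [zmat]
      rw [hj]
      have hmul := locMat3_mul (m + 3) i.1 (by omega)
      simp only [locMat_eq3_bot]
      simp only [locMat_eq3_top]
      rw [hmul, hmul, hmul, hmul]
      have h1 := hy α; have h2 := hy β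
      apply locMat3_congr <;> field_simp <;> ring
    · -- rel 9
      simp only [_root_.map_mul, _root_.map_inv, FreeGroup.lift_apply_of]
      refine mul_inv_eq_one.mpr (Units.ext ?_)
      show zmat m k y a b _ * zmat m k y a b _ * zmat m k y a b _ =
        zmat m k y a b _ * zmat m k y a b _ * zmat m k y a b _
      simp only [zmat]
      rw [hj]
      have hmul := locMat3_mul (m + 3) i.1 (by omega)
      simp only [locMat_eq3_bot]
      simp only [locMat_eq3_top]
      rw [hmul, hmul, hmul, hmul]
      have h1 := hy α
      apply locMat3_congr <;> field_simp <;> ring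
  refine ⟨PresentedGroup.toGroup hrel, fun i => ?_, fun i α => ?_⟩
  · have h1 : PresentedGroup.toGroup hrel (MVT.gen (MVTGen.s i)) = F (MVTGen.s i) :=
      PresentedGroup.toGroup.of hrel
    exact (congrArg Units.val h1).trans rfl
  · have h1 : PresentedGroup.toGroup hrel (MVT.gen (MVTGen.rho i α)) = F (MVTGen.rho i α) :=
      PresentedGroup.toGroup.of hrel
    exact (congrArg Units.val h1).trans rfl
end

section
/- Let n ≥ 3, k ≥ 1, y_0,…,y_{k−1} ∈ ℂ*, z ∈ ℂ*, and let ζ_6 be the 2-local representation of M_kVT_n with s_i ↦ block [[1, z],[0, −1]] and ρ_i^α ↦ block [[0, 1/y_α],[y_α, 0]] at positions i, i+1. Then for all 1 ≤ i ≤ n−2 and 0 ≤ α ≤ k−1, the matrix (ζ_6(s_i) ζ_6(ρ_{i+1}^α))^4 equals the identity matrix I_n; equivalently, the element (s_i ρ_{i+1}^α)^4 lies in the kernel of ζ_6. -/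
/-- Embedding of a (ℕ-indexed) `3 × 3` matrix as an `n × n` matrix, identity outside
the block at rows/columns `i, i+1, i+2`. -/
def emb (n i : ℕ) (M : ℕ → ℕ → ℂ) : Matrix (Fin n) (Fin n) ℂ :=
  Matrix.of fun p q =>
    if i ≤ p.1 ∧ p.1 < i + 3 then
      if i ≤ q.1 ∧ q.1 < i + 3 then M (p.1 - i) (q.1 - i) else 0
    else if p = q then 1 else 0

/-- `3 × 3` multiplication of ℕ-indexed matrices. -/
def mul3 (M N : ℕ → ℕ → ℂ) : ℕ → ℕ → ℂ := fun j l =>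
  M j 0 * N 0 l + M j 1 * N 1 l + M j 2 * N 2 l

lemma sum_block (n i : ℕ) (h : i + 2 < n) (f : Fin n → ℂ)
    (hf : ∀ r : Fin n, ¬(i ≤ r.1 ∧ r.1 < i + 3) → f r = 0) :
    ∑ r, f r = f ⟨i, by omega⟩ + f ⟨i + 1, by omega⟩ + f ⟨i + 2, by omega⟩ := by
  classical
  set e0 : Fin n := ⟨i, by omega⟩
  set e1 : Fin n := ⟨i + 1, by omega⟩
  set e2 : Fin n := ⟨i + 2, by omega⟩
  have hsub : ({e0, e1, e2} : Finset (Fin n)) ⊆ Finset.univ := Finset.subset_univ _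
  have hz : ∀ x ∈ Finset.univ, x ∉ ({e0, e1, e2} : Finset (Fin n)) → f x = 0 := by
    intro x _ hx
    apply hf
    intro hmem
    apply hx
    simp only [Finset.mem_insert, Finset.mem_singleton]
    have : x.1 = i ∨ x.1 = i + 1 ∨ x.1 = i + 2 := by omega
    rcases this with h | h | h
    · exact Or.inl (Fin.ext h)
    · exact Or.inr (Or.inl (Fin.ext h))
    · exact Or.inr (Or.inr (Fin.ext h))
  rw [← Finset.sum_subset hsub hz]
  have h01 : e0 ≠ e1 := by simp [Fin.ext_iff, e0, e1]
  have h02 : e0 ≠ e2 := by simp [Fin.ext_iff, e0, e2]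
  have h12 : e1 ≠ e2 := by simp [Fin.ext_iff, e1, e2]
  rw [Finset.sum_insert (by simp [h01, h02]), Finset.sum_insert (by simp [h12]),
    Finset.sum_singleton, add_assoc]

lemma emb_mul (n i : ℕ) (h : i + 2 < n) (M N : ℕ → ℕ → ℂ) :
    emb n i M * emb n i N = emb n i (mul3 M N) := by
  classical
  ext p q
  rw [Matrix.mul_apply]
  by_cases hp : i ≤ p.1 ∧ p.1 < i + 3
  · have hsum : ∑ r, emb n i M p r * emb n i N r q =
        emb n i M p ⟨i, by omega⟩ * emb n i N ⟨i, by omega⟩ q +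
        emb n i M p ⟨i + 1, by omega⟩ * emb n i N ⟨i + 1, by omega⟩ q +
        emb n i M p ⟨i + 2, by omega⟩ * emb n i N ⟨i + 2, by omega⟩ q := by
      apply sum_block n i h
      intro r hr
      have : emb n i M p r = 0 := by
        simp only [emb, Matrix.of_apply, if_pos hp, if_neg hr]
      rw [this, zero_mul]
    rw [hsum]
    by_cases hq : i ≤ q.1 ∧ q.1 < i + 3
    · simp only [emb, Matrix.of_apply, mul3, if_pos hp, if_pos hq]
      have b0 : i ≤ i ∧ i < i + 3 := by omega
      have b1 : i ≤ i + 1 ∧ i + 1 < i + 3 := by omega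
      have b2 : i ≤ i + 2 ∧ i + 2 < i + 3 := by omega
      simp only [if_pos b0, if_pos b1, if_pos b2]
      norm_num
    · simp only [emb, Matrix.of_apply, mul3, if_pos hp, if_neg hq]
      have b0 : i ≤ i ∧ i < i + 3 := by omega
      have b1 : i ≤ i + 1 ∧ i + 1 < i + 3 := by omega
      have b2 : i ≤ i + 2 ∧ i + 2 < i + 3 := by omega
      simp only [if_pos b0, if_pos b1, if_pos b2]
      ring
  · have hsum : ∀ r : Fin n, emb n i M p r * emb n i N r q =
        if p = r then emb n i N r q else 0 := by
      intro r
      simp only [emb, Matrix.of_apply, if_neg hp]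
      split_ifs <;> ring
    simp only [hsum]
    rw [Finset.sum_ite_eq]
    simp only [Finset.mem_univ, if_pos]
    simp only [emb, Matrix.of_apply, if_neg hp]

lemma emb_eq_one (n i : ℕ) (M : ℕ → ℕ → ℂ)
    (hM : ∀ j l, j < 3 → l < 3 → M j l = if j = l then 1 else 0) :
    emb n i M = 1 := by
  ext p q
  simp only [emb, Matrix.of_apply, Matrix.one_apply]
  by_cases hp : i ≤ p.1 ∧ p.1 < i + 3
  · rw [if_pos hp]
    by_cases hq : i ≤ q.1 ∧ q.1 < i + 3
    · rw [if_pos hq, hM _ _ (by omega) (by omega)]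
      by_cases hpq : p = q
      · subst hpq; simp
      · rw [if_neg hpq, if_neg (by rw [Fin.ext_iff] at hpq; omega)]
    · rw [if_neg hq, if_neg (by rw [Fin.ext_iff]; omega)]
  · rw [if_neg hp]

/-- For the 2-local representation `ζ₆` (with `sᵢ ↦` block `[[1, z],[0, -1]]` and
`ρᵢ^α ↦` block `[[0, 1/y_α],[y_α, 0]]`), the matrix `(ζ₆(sᵢ) ζ₆(ρ_{i+1}^α))⁴` equals the
identity, i.e. `(sᵢ ρ_{i+1}^α)⁴` lies in the kernel of `ζ₆`. -/
theorem zeta6_kernel_element (n : ℕ) (hn : 3 ≤ n) (y z : ℂ) (hy : y ≠ 0) (hz : z ≠ 0)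
    (i : ℕ) (hi : i + 2 < n) :
    (locMat n i 1 z 0 (-1) * locMat n (i + 1) 0 y⁻¹ y 0) ^ 4 = 1 := by
  set M1 : ℕ → ℕ → ℂ := fun j l =>
    if j = 0 ∧ l = 0 then 1 else if j = 0 ∧ l = 1 then z
    else if j = 1 ∧ l = 1 then -1 else if j = 2 ∧ l = 2 then 1 else 0 with hM1
  set M2 : ℕ → ℕ → ℂ := fun j l =>
    if j = 0 ∧ l = 0 then 1 else if j = 1 ∧ l = 2 then y⁻¹
    else if j = 2 ∧ l = 1 then y else 0 with hM2
  have e1 : locMat n i 1 z 0 (-1) = emb n i M1 := by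
    ext p q
    simp only [locMat, emb, Matrix.of_apply, hM1]
    by_cases hp : i ≤ p.1 ∧ p.1 < i + 3
    · by_cases hq : i ≤ q.1 ∧ q.1 < i + 3
      · rw [if_pos hp, if_pos hq]
        have hpv : p.1 = i ∨ p.1 = i + 1 ∨ p.1 = i + 2 := by omega
        have hqv : q.1 = i ∨ q.1 = i + 1 ∨ q.1 = i + 2 := by omega
        rcases hpv with h1 | h1 | h1 <;> rcases hqv with h2 | h2 | h2 <;>
          simp [h1, h2, Fin.ext_iff] <;> omega
      · rw [if_pos hp, if_neg hq]
        split_ifs with a b c d e <;> first | rfl | omega | (exfalso; rw [Fin.ext_iff] at e; omega)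
    · rw [if_neg hp]
      split_ifs with a b c d <;> first | rfl | omega
  have e2 : locMat n (i + 1) 0 y⁻¹ y 0 = emb n i M2 := by
    ext p q
    simp only [locMat, emb, Matrix.of_apply, hM2]
    by_cases hp : i ≤ p.1 ∧ p.1 < i + 3
    · by_cases hq : i ≤ q.1 ∧ q.1 < i + 3
      · rw [if_pos hp, if_pos hq]
        have hpv : p.1 = i ∨ p.1 = i + 1 ∨ p.1 = i + 2 := by omega
        have hqv : q.1 = i ∨ q.1 = i + 1 ∨ q.1 = i + 2 := by omega
        rcases hpv with h1 | h1 | h1 <;> rcases hqv with h2 | h2 | h2 <;>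
          simp [h1, h2, Fin.ext_iff] <;> omega
      · rw [if_pos hp, if_neg hq]
        split_ifs with a b c d e <;> first | rfl | omega | (exfalso; rw [Fin.ext_iff] at e; omega)
    · rw [if_neg hp]
      split_ifs with a b c d <;> first | rfl | omega
  rw [e1, e2, emb_mul n i hi]
  set C : ℕ → ℕ → ℂ := mul3 M1 M2 with hC
  have hpow : emb n i C ^ 4 = ((emb n i C * emb n i C) * emb n i C) * emb n i C := by
    rw [pow_succ, pow_succ, pow_succ, pow_one]
  rw [hpow, emb_mul n i hi, emb_mul n i hi, emb_mul n i hi]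
  apply emb_eq_one
  intro j l hj hl
  interval_cases j <;> interval_cases l <;>
    simp only [mul3, hC, hM1, hM2] <;> norm_num <;> field_simp <;> ring <;> simp
end

section
/- Let n ≥ 3, k ≥ 1, y_0,…,y_{k−1} ∈ ℂ*, b ∈ ℂ*, and let ζ_8 be the 2-local representation of M_kVT_n with s_i ↦ block [[−a, −(a²−1)/b],[b, a]] and ρ_i^α ↦ block [[0, 1/y_α],[y_α, 0]] at positions i, i+1, where a = 0. Then for all 1 ≤ i ≤ n−2 and 0 ≤ α ≤ k−1, the matrix (ζ_8(s_i) ζ_8(ρ_{i+1}^α))^3 equals the identity I_n. -/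
/-- A "monomial-type" matrix with at most one nonzero entry `c p` in each row `p`,
located at column `σ p`. -/
def mono (n : ℕ) (c : Fin n → ℂ) (σ : Fin n → Fin n) : Matrix (Fin n) (Fin n) ℂ :=
  Matrix.of fun p q => if q = σ p then c p else 0

lemma mono_mul (n : ℕ) (c d : Fin n → ℂ) (σ τ : Fin n → Fin n) :
    mono n c σ * mono n d τ = mono n (fun p => c p * d (σ p)) (fun p => τ (σ p)) := by
  ext p q
  simp only [mono, Matrix.of_apply, Matrix.mul_apply, ite_mul, zero_mul]
  rw [Finset.sum_eq_single (σ p)] <;> simp_all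

lemma locMat_eq_mono (n i : ℕ) (h1 : i + 1 < n) (u v : ℂ) :
    locMat n i 0 u v 0 = mono n
      (fun p => if p.1 = i then u else if p.1 = i + 1 then v else 1)
      (fun p => if p.1 = i then ⟨i + 1, h1⟩ else if p.1 = i + 1 then ⟨i, by omega⟩ else p) := by
  have e1 : i ≠ i + 1 := by omega
  have e2 : i + 1 ≠ i := by omega
  ext p q
  simp only [locMat, mono, Matrix.of_apply]
  by_cases hp : p.1 = i <;> by_cases hp1 : p.1 = i + 1 <;>
    by_cases hq : q.1 = i <;> by_cases hq1 : q.1 = i + 1 <;>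
      simp [Fin.ext_iff, hp, hp1, hq, hq1, e1, e2] <;>
        first
        | omega
        | (split_ifs <;> first | rfl | (exfalso; omega))

/-- For the 2-local representation `ζ₈` with `a = 0` (so `sᵢ ↦` block
`[[-a, -(a²-1)/b],[b, a]] = [[0, 1/b],[b, 0]]` and `ρᵢ^α ↦` block `[[0, 1/y_α],[y_α, 0]]`),
the matrix `(ζ₈(sᵢ) ζ₈(ρ_{i+1}^α))³` equals the identity. -/
theorem zeta8_a_zero_kernel_element (n : ℕ) (hn : 3 ≤ n) (y b a : ℂ) (hy : y ≠ 0)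
    (hb : b ≠ 0) (ha : a = 0) (i : ℕ) (hi : i + 2 < n) :
    (locMat n i (-a) (-((a ^ 2 - 1) / b)) b a * locMat n (i + 1) 0 y⁻¹ y 0) ^ 3 = 1 := by
  subst ha
  have h1 : i + 1 < n := by omega
  have h1' : i + 1 + 1 < n := by omega
  rw [show -(((0:ℂ) ^ 2 - 1) / b) = b⁻¹ from by ring, neg_zero,
    locMat_eq_mono n i h1 b⁻¹ b, locMat_eq_mono n (i + 1) h1' y⁻¹ y, mono_mul,
    pow_succ, pow_succ, pow_one, mono_mul, mono_mul]
  have g1 : i + 1 ≠ i := by omega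
  have g2 : i + 1 + 1 ≠ i := by omega
  have g3 : i + 1 + 1 ≠ i + 1 := by omega
  have g4 : i ≠ i + 1 := by omega
  have g5 : i ≠ i + 1 + 1 := by omega
  have g6 : i + 1 ≠ i + 1 + 1 := by omega
  ext p q
  simp only [mono, Matrix.of_apply, Matrix.one_apply]
  by_cases hp0 : p.1 = i <;> by_cases hp1 : p.1 = i + 1 <;> by_cases hp2 : p.1 = i + 1 + 1 <;>
    simp [hp0, hp1, hp2, Fin.ext_iff, g1, g2, g3, g4, g5, g6, hb, hy] <;>
      first
      | omega
      | (split_ifs <;> first | rfl | (exfalso; omega) | (field_simp; try ring))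
end

section
/- Let n ≥ 3, k ≥ 1 and suppose y_α = y for all 0 ≤ α ≤ k−1, with y ∈ ℂ*. Let ζ_2 be the 2-local representation of M_kVT_n with s_i ↦ I_n and ρ_i^α ↦ the identity-except-block matrix with block [[0, 1/y],[y, 0]] at rows/columns i, i+1. Then the one-dimensional subspace of ℂ^n spanned by the vector v = (1, y, y², …, y^{n−1})ᵀ is invariant under ζ_2(s_i) and ζ_2(ρ_i^α) for all i, α; hence ζ_2 is reducible. -/
lemma locMat_mulVec_fixed (n i : ℕ) (hi : i + 1 < n) (y : ℂ) (hy : y ≠ 0) :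
    (locMat n i 0 y⁻¹ y 0).mulVec (fun p : Fin n => y ^ p.1) =
      (fun p : Fin n => y ^ p.1) := by
  funext p
  have hiN : i < n := by omega
  simp only [Matrix.mulVec, dotProduct, locMat, Matrix.of_apply]
  by_cases hp1 : p.1 = i
  · rw [Finset.sum_eq_single (⟨i + 1, hi⟩ : Fin n)]
    · simp [hp1, hy, pow_succ]
      field_simp
    · intro q _ hq
      have hq1 : q.1 ≠ i + 1 := fun h => hq (Fin.ext h)
      have hp2 : p.1 ≠ i + 1 := by omega
      by_cases hqi : q.1 = i
      · simp [hp1, hqi]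
      · have : p ≠ q := fun h => hqi (by rw [← h, hp1])
        simp [hp1, hqi, hq1, this]
    · simp
  · by_cases hp2 : p.1 = i + 1
    · rw [Finset.sum_eq_single (⟨i, hiN⟩ : Fin n)]
      · simp [hp1, hp2, pow_succ, mul_comm]
      · intro q _ hq
        have hq1 : q.1 ≠ i := fun h => hq (Fin.ext h)
        by_cases hq2 : q.1 = i + 1
        · simp [hp1, hp2, hq1, hq2]
        · have : p ≠ q := fun h => hq2 (by rw [← h, hp2])
          simp [hp1, hp2, hq1, hq2, this]
      · simp
    · rw [Finset.sum_eq_single p]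
      · simp [hp1, hp2]
      · intro q _ hq
        have : p ≠ q := fun h => hq h.symm
        by_cases hq1 : q.1 = i <;> by_cases hq2 : q.1 = i + 1 <;>
          simp [hp1, hp2, hq1, hq2, this]
      · simp

/-- If all `y_α` equal a common value `y ≠ 0`, then the line spanned by
`v = (1, y, y², …, y^{n-1})ᵀ` is invariant under all the matrices `ζ₂(sᵢ) = Iₙ` and
`ζ₂(ρᵢ^α)`; hence `ζ₂` is reducible. -/
theorem zeta2_equal_params_reducible (n : ℕ) (hn : 3 ≤ n) (k : ℕ) (hk : 1 ≤ k)
    (y : ℂ) (hy : y ≠ 0) :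
    (∀ u ∈ Submodule.span ℂ {fun p : Fin n => y ^ p.1},
      (1 : Matrix (Fin n) (Fin n) ℂ).mulVec u ∈
        Submodule.span ℂ {fun p : Fin n => y ^ p.1}) ∧
    (∀ i : ℕ, i + 1 < n →
      ∀ u ∈ Submodule.span ℂ {fun p : Fin n => y ^ p.1},
        (locMat n i 0 y⁻¹ y 0).mulVec u ∈
          Submodule.span ℂ {fun p : Fin n => y ^ p.1}) ∧
    Submodule.span ℂ {fun p : Fin n => y ^ p.1} ≠ ⊥ ∧
    Submodule.span ℂ {fun p : Fin n => y ^ p.1} ≠ ⊤ := by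
  refine ⟨?_, ?_, ?_, ?_⟩
  · intro u hu
    simpa using hu
  · intro i hi u hu
    rw [Submodule.mem_span_singleton] at hu ⊢
    obtain ⟨c, rfl⟩ := hu
    exact ⟨c, by rw [Matrix.mulVec_smul, locMat_mulVec_fixed n i hi y hy]⟩
  · intro h
    have hv : (fun p : Fin n => y ^ p.1) ∈ Submodule.span ℂ
        {fun p : Fin n => y ^ p.1} := Submodule.mem_span_singleton_self _
    rw [h, Submodule.mem_bot] at hv
    have := congrFun hv ⟨0, by omega⟩
    simp at this
  · intro h
    have hw : (fun p : Fin n => if p.1 = 0 then (0:ℂ) else if p.1 = 1 then 1 else 0) ∈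
        Submodule.span ℂ {fun p : Fin n => y ^ p.1} := h ▸ Submodule.mem_top
    rw [Submodule.mem_span_singleton] at hw
    obtain ⟨c, hc⟩ := hw
    have h0 := congrFun hc ⟨0, by omega⟩
    have h1 := congrFun hc ⟨1, by omega⟩
    simp at h0 h1
    rw [h0] at h1
    simp at h1
end

section
/- Let y_0, y_1 ∈ ℂ* with y_0 ≠ y_1. Consider the six 3×3 matrices L12 = [[0, 1/y_0, 0],[y_0, 0, 0],[0,0,1]], L23 = [[1,0,0],[0,0,1/y_0],[0,y_0,0]], L13 = [[0,0,1/y_0²],[0,1,0],[y_0²,0,0]], M12 = diag(y_1/y_0, y_0/y_1, 1), M23 = diag(1, y_1/y_0, y_0/y_1), M13 = diag(y_1/y_0, 1, y_0/y_1). Then the only subspaces of ℂ³ invariant under all six matrices are 0 and ℂ³ (i.e., this collection of matrices acts irreducibly). -/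
/-- The six `3 × 3` matrices giving the images of the generators of `M₂VPT₃` under the
representation induced by `ζ₂`, with `y₀ ≠ y₁`, act irreducibly on `ℂ³`: the only
invariant subspaces are `0` and `ℂ³`. -/
theorem m2vpt3_zeta2_irreducible (y0 y1 : ℂ) (h0 : y0 ≠ 0) (h1 : y1 ≠ 0) (hne : y0 ≠ y1)
    (U : Submodule ℂ (Fin 3 → ℂ))
    (hL12 : ∀ u ∈ U, (!![0, y0⁻¹, 0; y0, 0, 0; 0, 0, 1]).mulVec u ∈ U)
    (hL23 : ∀ u ∈ U, (!![1, 0, 0; 0, 0, y0⁻¹; 0, y0, 0]).mulVec u ∈ U)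
    (hL13 : ∀ u ∈ U, (!![0, 0, (y0 ^ 2)⁻¹; 0, 1, 0; y0 ^ 2, 0, 0]).mulVec u ∈ U)
    (hM12 : ∀ u ∈ U, (!![y1 / y0, 0, 0; 0, y0 / y1, 0; 0, 0, 1]).mulVec u ∈ U)
    (hM23 : ∀ u ∈ U, (!![1, 0, 0; 0, y1 / y0, 0; 0, 0, y0 / y1]).mulVec u ∈ U)
    (hM13 : ∀ u ∈ U, (!![y1 / y0, 0, 0; 0, 1, 0; 0, 0, y0 / y1]).mulVec u ∈ U) :
    U = ⊥ ∨ U = ⊤ := by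
  by_cases hU : U = ⊥
  · exact Or.inl hU
  right
  have hsub : y0 - y1 ≠ 0 := sub_ne_zero.mpr hne
  have key : ∀ u ∈ U, (![0, u 1, -u 2] : Fin 3 → ℂ) ∈ U := by
    intro u hu
    have h2 := U.smul_mem (y1/(y0 - y1)) (U.sub_mem (hM12 u hu) (hM13 u hu))
    convert h2 using 1
    funext i
    fin_cases i <;>
      simp [Matrix.mulVec, dotProduct, Fin.sum_univ_three] <;>
      field_simp <;> ring
  have key2 : ∀ u ∈ U, (![0, u 1, 0] : Fin 3 → ℂ) ∈ U := by
    intro u hu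
    have ha := key u hu
    have hb := key _ ha
    have hc := U.smul_mem (1/2 : ℂ) (U.add_mem ha hb)
    convert hc using 1
    funext i; fin_cases i <;>
      simp [Matrix.vecHead, Matrix.vecTail] <;> ring
  have key3 : ∀ u ∈ U, (![0, 0, u 2] : Fin 3 → ℂ) ∈ U := by
    intro u hu
    have hc := U.sub_mem (key2 u hu) (key u hu)
    convert hc using 1
    funext i; fin_cases i <;> simp [Matrix.vecHead, Matrix.vecTail]
  have key1 : ∀ u ∈ U, (![u 0, 0, 0] : Fin 3 → ℂ) ∈ U := by
    intro u hu
    have hc := U.sub_mem (U.sub_mem hu (key2 u hu)) (key3 u hu)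
    convert hc using 1
    funext i; fin_cases i <;> simp [Matrix.vecHead, Matrix.vecTail]
  have h01 : (![1,0,0] : Fin 3 → ℂ) ∈ U → (![0,1,0] : Fin 3 → ℂ) ∈ U := by
    intro h
    have hc := U.smul_mem y0⁻¹ (hL12 _ h)
    convert hc using 1
    funext i; fin_cases i <;>
      simp [Matrix.mulVec, dotProduct, Fin.sum_univ_three, h0]
  have h10 : (![0,1,0] : Fin 3 → ℂ) ∈ U → (![1,0,0] : Fin 3 → ℂ) ∈ U := by
    intro h
    have hc := U.smul_mem y0 (hL12 _ h)
    convert hc using 1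
    funext i; fin_cases i <;>
      simp [Matrix.mulVec, dotProduct, Fin.sum_univ_three, h0]
  have h12 : (![0,1,0] : Fin 3 → ℂ) ∈ U → (![0,0,1] : Fin 3 → ℂ) ∈ U := by
    intro h
    have hc := U.smul_mem y0⁻¹ (hL23 _ h)
    convert hc using 1
    funext i; fin_cases i <;>
      simp [Matrix.mulVec, dotProduct, Fin.sum_univ_three, h0]
  have h21 : (![0,0,1] : Fin 3 → ℂ) ∈ U → (![0,1,0] : Fin 3 → ℂ) ∈ U := by
    intro h
    have hc := U.smul_mem y0 (hL23 _ h)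
    convert hc using 1
    funext i; fin_cases i <;>
      simp [Matrix.mulVec, dotProduct, Fin.sum_univ_three, h0]
  obtain ⟨u, hu, hne0⟩ : ∃ u ∈ U, u ≠ 0 := by
    by_contra hcon
    push_neg at hcon
    exact hU (Submodule.eq_bot_iff U |>.mpr hcon)
  have hall : (![1,0,0] : Fin 3 → ℂ) ∈ U ∧ (![0,1,0] : Fin 3 → ℂ) ∈ U ∧
      (![0,0,1] : Fin 3 → ℂ) ∈ U := by
    have hor : u 0 ≠ 0 ∨ u 1 ≠ 0 ∨ u 2 ≠ 0 := by
      by_contra hc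
      push_neg at hc
      apply hne0
      funext i; fin_cases i <;> simp [hc.1, hc.2.1, hc.2.2]
    rcases hor with hc | hc | hc
    · have he : (![1,0,0] : Fin 3 → ℂ) ∈ U := by
        have hm := U.smul_mem (u 0)⁻¹ (key1 u hu)
        convert hm using 1
        funext i; fin_cases i <;> simp [Matrix.vecHead, Matrix.vecTail, hc]
      exact ⟨he, h01 he, h12 (h01 he)⟩
    · have he : (![0,1,0] : Fin 3 → ℂ) ∈ U := by
        have hm := U.smul_mem (u 1)⁻¹ (key2 u hu)
        convert hm using 1
        funext i; fin_cases i <;> simp [Matrix.vecHead, Matrix.vecTail, hc]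
      exact ⟨h10 he, he, h12 he⟩
    · have he : (![0,0,1] : Fin 3 → ℂ) ∈ U := by
        have hm := U.smul_mem (u 2)⁻¹ (key3 u hu)
        convert hm using 1
        funext i; fin_cases i <;> simp [Matrix.vecHead, Matrix.vecTail, hc]
      exact ⟨h10 (h21 he), h21 he, he⟩
  rw [Submodule.eq_top_iff']
  intro v
  have hv : v = v 0 • (![1,0,0] : Fin 3 → ℂ) + v 1 • ![0,1,0] + v 2 • ![0,0,1] := by
    funext i; fin_cases i <;> simp
  rw [hv]
  exact U.add_mem (U.add_mem (U.smul_mem _ hall.1) (U.smul_mem _ hall.2.1)) (U.smul_mem _ hall.2.2)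
end

section
/- Let y ∈ ℂ*. Consider the six 3×3 matrices L12 = [[0, 1/y, 0],[y, 0, 0],[0,0,1]], L23 = [[1,0,0],[0,0,1/y],[0,y,0]], L13 = [[0,0,1/y²],[0,1,0],[y²,0,0]], and M12 = M23 = M13 = I_3 (the case y_0 = y_1 = y). Then the one-dimensional subspace of ℂ³ spanned by (1, y, y²)ᵀ is invariant under all six matrices, so the corresponding representation of M_2VPT_3 is reducible. -/
/-- In the case `y₀ = y₁ = y`, the line spanned by `(1, y, y²)ᵀ` is invariant under all
six matrices representing the generators of `M₂VPT₃` (the three diagonal ones being the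
identity), so the corresponding representation of `M₂VPT₃` is reducible. -/
theorem m2vpt3_zeta2_equal_reducible (y : ℂ) (hy : y ≠ 0) :
    (∀ u ∈ Submodule.span ℂ {![(1 : ℂ), y, y ^ 2]},
      (!![0, y⁻¹, 0; y, 0, 0; 0, 0, 1]).mulVec u ∈
        Submodule.span ℂ {![(1 : ℂ), y, y ^ 2]}) ∧
    (∀ u ∈ Submodule.span ℂ {![(1 : ℂ), y, y ^ 2]},
      (!![1, 0, 0; 0, 0, y⁻¹; 0, y, 0]).mulVec u ∈
        Submodule.span ℂ {![(1 : ℂ), y, y ^ 2]}) ∧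
    (∀ u ∈ Submodule.span ℂ {![(1 : ℂ), y, y ^ 2]},
      (!![0, 0, (y ^ 2)⁻¹; 0, 1, 0; y ^ 2, 0, 0]).mulVec u ∈
        Submodule.span ℂ {![(1 : ℂ), y, y ^ 2]}) ∧
    (∀ u ∈ Submodule.span ℂ {![(1 : ℂ), y, y ^ 2]},
      (1 : Matrix (Fin 3) (Fin 3) ℂ).mulVec u ∈
        Submodule.span ℂ {![(1 : ℂ), y, y ^ 2]}) ∧
    Submodule.span ℂ {![(1 : ℂ), y, y ^ 2]} ≠ ⊥ ∧
    Submodule.span ℂ {![(1 : ℂ), y, y ^ 2]} ≠ ⊤ := by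

  have key : ∀ (A : Matrix (Fin 3) (Fin 3) ℂ),
      A.mulVec ![(1:ℂ), y, y ^ 2] = ![(1:ℂ), y, y ^ 2] →
      ∀ u ∈ Submodule.span ℂ {![(1 : ℂ), y, y ^ 2]},
      A.mulVec u ∈ Submodule.span ℂ {![(1 : ℂ), y, y ^ 2]} := by
    intro A hA u hu
    rw [Submodule.mem_span_singleton] at hu ⊢
    obtain ⟨c, rfl⟩ := hu
    exact ⟨c, by rw [Matrix.mulVec_smul, hA]⟩
  refine ⟨key _ ?_, key _ ?_, key _ ?_, key _ ?_, ?_, ?_⟩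
  · funext i; fin_cases i <;>
      simp [Matrix.mulVec, dotProduct, Fin.sum_univ_three] <;>
      (try field_simp) <;> (try ring)
  · funext i; fin_cases i <;>
      simp [Matrix.mulVec, dotProduct, Fin.sum_univ_three] <;>
      (try field_simp) <;> (try ring)
  · funext i; fin_cases i <;>
      simp [Matrix.mulVec, dotProduct, Fin.sum_univ_three, pow_ne_zero, hy] <;>
      (try field_simp) <;> (try ring)
  · exact Matrix.one_mulVec _
  · rw [Ne, Submodule.span_singleton_eq_bot]
    intro h
    have := congrFun h 0
    simp at this
  · intro h
    have : ![(0:ℂ), 1, 0] ∈ Submodule.span ℂ {![(1 : ℂ), y, y ^ 2]} := h ▸ trivial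
    rw [Submodule.mem_span_singleton] at this
    obtain ⟨c, hc⟩ := this
    have h0 := congrFun hc 0
    have h1 := congrFun hc 1
    simp at h0 h1
    rw [h0] at h1
    simp at h1
end

section
/- Let y_0, y_1, b ∈ ℂ*, a ∈ ℂ with a ≠ 0 and y_0² ≠ y_1². Consider the 3×3 matrices L12 = [[b/y_0, a/y_0, 0],[−a y_0, (1−a²)y_0/b, 0],[0,0,1]], L23 = [[1,0,0],[0, b/y_0, a/y_0],[0, −a y_0, (1−a²)y_0/b]], L13 = [[b/y_0, 0, a/y_0²],[0,1,0],[−a y_0², 0, (1−a²)y_0/b]], together with the diagonal matrices M12 = diag(y_1/y_0, y_0/y_1, 1), M23 = diag(1, y_1/y_0, y_0/y_1), M13 = diag(y_1/y_0, 1, y_0/y_1). Then the only subspaces of ℂ³ invariant under all six matrices are 0 and ℂ³. -/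
/-- The six `3 × 3` matrices giving the images of the generators of `M₂VPT₃` under the
representation induced by `ζ₈`, with `a ≠ 0` and `y₀² ≠ y₁²`, act irreducibly on `ℂ³`. -/
theorem m2vpt3_zeta8_irreducible (y0 y1 b a : ℂ) (h0 : y0 ≠ 0) (h1 : y1 ≠ 0) (hb : b ≠ 0)
    (ha : a ≠ 0) (hne : y0 ^ 2 ≠ y1 ^ 2)
    (U : Submodule ℂ (Fin 3 → ℂ))
    (hL12 : ∀ u ∈ U,
      (!![b / y0, a / y0, 0; -a * y0, (1 - a ^ 2) * y0 / b, 0; 0, 0, 1]).mulVec u ∈ U)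
    (hL23 : ∀ u ∈ U,
      (!![1, 0, 0; 0, b / y0, a / y0; 0, -a * y0, (1 - a ^ 2) * y0 / b]).mulVec u ∈ U)
    (hL13 : ∀ u ∈ U,
      (!![b / y0, 0, a / y0 ^ 2; 0, 1, 0;
          -a * y0 ^ 2, 0, (1 - a ^ 2) * y0 / b]).mulVec u ∈ U)
    (hM12 : ∀ u ∈ U, (!![y1 / y0, 0, 0; 0, y0 / y1, 0; 0, 0, 1]).mulVec u ∈ U)
    (hM23 : ∀ u ∈ U, (!![1, 0, 0; 0, y1 / y0, 0; 0, 0, y0 / y1]).mulVec u ∈ U)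
    (hM13 : ∀ u ∈ U, (!![y1 / y0, 0, 0; 0, 1, 0; 0, 0, y0 / y1]).mulVec u ∈ U) :
    U = ⊥ ∨ U = ⊤ := by
  by_cases hU : U = ⊥
  · exact Or.inl hU
  right
  obtain ⟨u, huU, hu⟩ := Submodule.exists_mem_ne_zero_of_ne_bot hU
  set c0 : ℂ := y1 / y0 with hc0
  set c1 : ℂ := y0 / y1 with hc1
  have hc01 : c0 ≠ c1 := by
    intro h; apply hne
    rw [hc0, hc1] at h
    field_simp at h
    linear_combination -h
  have hc0one : c0 ≠ 1 := by
    intro h; apply hne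
    rw [hc0, div_eq_one_iff_eq h0] at h
    rw [h]
  have hc1one : c1 ≠ 1 := by
    intro h; apply hne
    rw [hc1, div_eq_one_iff_eq h1] at h
    rw [h]
  -- action of the diagonal matrix M12 in explicit form
  have hD : ∀ v ∈ U, (![c0 * v 0, c1 * v 1, v 2] : Fin 3 → ℂ) ∈ U := by
    intro v hv
    have h := hM12 v hv
    have he : (!![c0, 0, 0; 0, c1, 0; 0, 0, 1]).mulVec v = ![c0 * v 0, c1 * v 1, v 2] := by
      funext j
      fin_cases j <;>
        simp [Matrix.mulVec, dotProduct, Fin.sum_univ_three]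
    rwa [he] at h
  -- standard basis vectors
  set e0 : Fin 3 → ℂ := ![1, 0, 0] with he0
  set e1 : Fin 3 → ℂ := ![0, 1, 0] with he1
  set e2 : Fin 3 → ℂ := ![0, 0, 1] with he2
  -- if a vector in U has nonzero i-th coordinate, then e_i ∈ U
  have extract : ∀ v ∈ U, (v 0 ≠ 0 → e0 ∈ U) ∧ (v 1 ≠ 0 → e1 ∈ U) ∧ (v 2 ≠ 0 → e2 ∈ U) := by
    intro v hv
    have hv1 := hD v hv
    have hv2 := hD _ hv1
    simp only [Matrix.cons_val_zero, Matrix.cons_val_one, Matrix.head_cons,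
      Matrix.cons_val_two, Matrix.tail_cons] at hv2
    refine ⟨?_, ?_, ?_⟩
    · intro hvi
      have hw : ((![c0 * (c0 * v 0), c1 * (c1 * v 1), v 2] : Fin 3 → ℂ)
          - (c1 + 1) • ![c0 * v 0, c1 * v 1, v 2] + (c1 * 1) • v) ∈ U :=
        U.add_mem (U.sub_mem hv2 (U.smul_mem _ hv1)) (U.smul_mem _ hv)
      have he : (![c0 * (c0 * v 0), c1 * (c1 * v 1), v 2] : Fin 3 → ℂ)
          - (c1 + 1) • ![c0 * v 0, c1 * v 1, v 2] + (c1 * 1) • v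
          = ((c0 - c1) * (c0 - 1) * v 0) • e0 := by
        funext j; fin_cases j <;> simp [he0] <;> ring
      rw [he] at hw
      have hs : (c0 - c1) * (c0 - 1) * v 0 ≠ 0 :=
        mul_ne_zero (mul_ne_zero (sub_ne_zero.mpr hc01) (sub_ne_zero.mpr hc0one)) hvi
      have := U.smul_mem ((c0 - c1) * (c0 - 1) * v 0)⁻¹ hw
      rwa [smul_smul, inv_mul_cancel₀ hs, one_smul] at this
    · intro hvi
      have hw : ((![c0 * (c0 * v 0), c1 * (c1 * v 1), v 2] : Fin 3 → ℂ)
          - (c0 + 1) • ![c0 * v 0, c1 * v 1, v 2] + (c0 * 1) • v) ∈ U :=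
        U.add_mem (U.sub_mem hv2 (U.smul_mem _ hv1)) (U.smul_mem _ hv)
      have he : (![c0 * (c0 * v 0), c1 * (c1 * v 1), v 2] : Fin 3 → ℂ)
          - (c0 + 1) • ![c0 * v 0, c1 * v 1, v 2] + (c0 * 1) • v
          = ((c1 - c0) * (c1 - 1) * v 1) • e1 := by
        funext j; fin_cases j <;> simp [he1] <;> ring
      rw [he] at hw
      have hs : (c1 - c0) * (c1 - 1) * v 1 ≠ 0 :=
        mul_ne_zero (mul_ne_zero (sub_ne_zero.mpr (Ne.symm hc01)) (sub_ne_zero.mpr hc1one)) hvi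
      have := U.smul_mem ((c1 - c0) * (c1 - 1) * v 1)⁻¹ hw
      rwa [smul_smul, inv_mul_cancel₀ hs, one_smul] at this
    · intro hvi
      have hw : ((![c0 * (c0 * v 0), c1 * (c1 * v 1), v 2] : Fin 3 → ℂ)
          - (c0 + c1) • ![c0 * v 0, c1 * v 1, v 2] + (c0 * c1) • v) ∈ U :=
        U.add_mem (U.sub_mem hv2 (U.smul_mem _ hv1)) (U.smul_mem _ hv)
      have he : (![c0 * (c0 * v 0), c1 * (c1 * v 1), v 2] : Fin 3 → ℂ)
          - (c0 + c1) • ![c0 * v 0, c1 * v 1, v 2] + (c0 * c1) • v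
          = ((1 - c0) * (1 - c1) * v 2) • e2 := by
        funext j; fin_cases j <;> simp [he2] <;> ring
      rw [he] at hw
      have hs : (1 - c0) * (1 - c1) * v 2 ≠ 0 :=
        mul_ne_zero (mul_ne_zero (sub_ne_zero.mpr (Ne.symm hc0one))
          (sub_ne_zero.mpr (Ne.symm hc1one))) hvi
      have := U.smul_mem ((1 - c0) * (1 - c1) * v 2)⁻¹ hw
      rwa [smul_smul, inv_mul_cancel₀ hs, one_smul] at this
  -- e1, e2 from e0 and conversely
  have h10 : e1 ∈ U → e0 ∈ U := by
    intro h
    have hL := hL12 e1 h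
    have heq : (!![b / y0, a / y0, 0; -a * y0, (1 - a ^ 2) * y0 / b, 0; 0, 0, 1]).mulVec e1
        = ![a / y0, (1 - a ^ 2) * y0 / b, 0] := by
      funext j; fin_cases j <;>
        simp [he1, Matrix.mulVec, dotProduct, Fin.sum_univ_three]
    rw [heq] at hL
    exact (extract _ hL).1 (by simp [div_ne_zero ha h0])
  have h20 : e2 ∈ U → e0 ∈ U := by
    intro h
    have hL := hL13 e2 h
    have heq : (!![b / y0, 0, a / y0 ^ 2; 0, 1, 0;
        -a * y0 ^ 2, 0, (1 - a ^ 2) * y0 / b]).mulVec e2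
        = ![a / y0 ^ 2, 0, (1 - a ^ 2) * y0 / b] := by
      funext j; fin_cases j <;>
        simp [he2, Matrix.mulVec, dotProduct, Fin.sum_univ_three]
    rw [heq] at hL
    exact (extract _ hL).1 (by simp [div_ne_zero ha (pow_ne_zero 2 h0)])
  have h01 : e0 ∈ U → e1 ∈ U := by
    intro h
    have hL := hL12 e0 h
    have heq : (!![b / y0, a / y0, 0; -a * y0, (1 - a ^ 2) * y0 / b, 0; 0, 0, 1]).mulVec e0
        = ![b / y0, -a * y0, 0] := by
      funext j; fin_cases j <;>
        simp [he0, Matrix.mulVec, dotProduct, Fin.sum_univ_three]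
    rw [heq] at hL
    exact (extract _ hL).2.1 (by simp [mul_ne_zero ha h0])
  have h02 : e0 ∈ U → e2 ∈ U := by
    intro h
    have hL := hL13 e0 h
    have heq : (!![b / y0, 0, a / y0 ^ 2; 0, 1, 0;
        -a * y0 ^ 2, 0, (1 - a ^ 2) * y0 / b]).mulVec e0
        = ![b / y0, 0, -a * y0 ^ 2] := by
      funext j; fin_cases j <;>
        simp [he0, Matrix.mulVec, dotProduct, Fin.sum_univ_three]
    rw [heq] at hL
    exact (extract _ hL).2.2 (by simp [mul_ne_zero ha (pow_ne_zero 2 h0), h0])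
  -- since u ≠ 0, some coordinate is nonzero, hence e0 ∈ U
  have hE0 : e0 ∈ U := by
    have hex : u 0 ≠ 0 ∨ u 1 ≠ 0 ∨ u 2 ≠ 0 := by
      by_contra hcon
      push_neg at hcon
      apply hu
      funext j; fin_cases j <;> simp [hcon.1, hcon.2.1, hcon.2.2]
    rcases hex with h | h | h
    · exact (extract u huU).1 h
    · exact h10 ((extract u huU).2.1 h)
    · exact h20 ((extract u huU).2.2 h)
  have hE1 := h01 hE0
  have hE2 := h02 hE0
  -- every vector is a combination of e0, e1, e2
  rw [Submodule.eq_top_iff']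
  intro v
  have hv : v = v 0 • e0 + v 1 • e1 + v 2 • e2 := by
    funext j; fin_cases j <;> simp [he0, he1, he2]
  rw [hv]
  exact U.add_mem (U.add_mem (U.smul_mem _ hE0) (U.smul_mem _ hE1)) (U.smul_mem _ hE2)
end
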